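/- Let F be a suc-stable fragment, k ∈ ℕ, and for each i ∈ [1,k] let ⟨u_i,α_i⟩ and ⟨v_i,β_i⟩ be V_i-valuations, where the finite variable sets V_1, …, V_k are mutually disjoint. If Duplicator has a winning strategy in the configuration (F, ⟨u_i,α_i⟩, ⟨v_i,β_i⟩) for each i ∈ [1,k], then Duplicator has a winning strategy in the configuration (F, ⟨u_1⋯u_k, α_1∪⋯∪α_k⟩, ⟨v_1⋯v_k, β_1∪⋯∪β_k⟩). -/

import Mathlib

set_option autoImplicit false

instance instCountableLex {α : Type*} [Countable α] : Countable (Lex α) :=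
  inferInstanceAs (Countable α)

namespace EFGames

/-! ### Syntax of first-order logic over words.
Letters of the alphabet `Λ` and first-order variables are represented by natural numbers. -/

inductive FOForm : Type where
  | top | bot | empt
  | eq (x y : ℕ) | lab (x a : ℕ)
  | lt (x y : ℕ) | le (x y : ℕ) | suc (x y : ℕ)
  | fmin (x : ℕ) | fmax (x : ℕ)
  | not (φ : FOForm) | or (φ ψ : FOForm) | and (φ ψ : FOForm)
  | ex (x : ℕ) (φ : FOForm) | all (x : ℕ) (φ : FOForm)

/-- Free variables of a formula. -/
def FOForm.FV : FOForm → Finset ℕ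
  | .top | .bot | .empt => ∅
  | .eq x y | .lt x y | .le x y | .suc x y => {x, y}
  | .lab x _ | .fmin x | .fmax x => {x}
  | .not φ => φ.FV
  | .or φ ψ | .and φ ψ => φ.FV ∪ ψ.FV
  | .ex x φ | .all x φ => φ.FV.erase x

/-- Quantifier depth. -/
def FOForm.qd : FOForm → ℕ
  | .not φ => φ.qd
  | .or φ ψ | .and φ ψ => max φ.qd ψ.qd
  | .ex _ φ | .all _ φ => φ.qd + 1
  | _ => 0

/-- All variables occurring in a formula (free or bound). -/
def FOForm.vars : FOForm → Finset ℕ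
  | .top | .bot | .empt => ∅
  | .eq x y | .lt x y | .le x y | .suc x y => {x, y}
  | .lab x _ | .fmin x | .fmax x => {x}
  | .not φ => φ.vars
  | .or φ ψ | .and φ ψ => φ.vars ∪ ψ.vars
  | .ex x φ | .all x φ => insert x φ.vars

/-- The formula contains none of the predicates `suc`, `min`, `max`, `empty`. -/
def FOForm.NoSMME : FOForm → Prop
  | .empt | .suc _ _ | .fmin _ | .fmax _ => False
  | .not φ => φ.NoSMME
  | .or φ ψ | .and φ ψ => φ.NoSMME ∧ ψ.NoSMME
  | .ex _ φ | .all _ φ => φ.NoSMME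
  | _ => True

/-- The formula contains the predicate `≤` or `<`. -/
def FOForm.HasOrder : FOForm → Prop
  | .lt _ _ | .le _ _ => True
  | .not φ => φ.HasOrder
  | .or φ ψ | .and φ ψ => φ.HasOrder ∨ ψ.HasOrder
  | .ex _ φ | .all _ φ => φ.HasOrder
  | _ => False

/-- The formula contains one of the predicates `suc`, `min`, `max`, `empty`. -/
def FOForm.HasSMME : FOForm → Prop
  | .empt | .suc _ _ | .fmin _ | .fmax _ => True
  | .not φ => φ.HasSMME
  | .or φ ψ | .and φ ψ => φ.HasSMME ∨ ψ.HasSMME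
  | .ex _ φ | .all _ φ => φ.HasSMME
  | _ => False

def FOForm.IsAtomic : FOForm → Prop
  | .top | .bot | .empt | .eq _ _ | .lab _ _ | .lt _ _ | .le _ _
  | .suc _ _ | .fmin _ | .fmax _ => True
  | _ => False

/-- A literal is an atomic formula or a negated atomic formula. -/
def FOForm.IsLiteral (φ : FOForm) : Prop :=
  φ.IsAtomic ∨ ∃ ψ : FOForm, ψ.IsAtomic ∧ φ = .not ψ

/-- A sentence is a formula without free variables. -/
def FOForm.IsSentence (φ : FOForm) : Prop := φ.FV = ∅

/-- Contexts: formulas with exactly one occurrence of a placeholder `∘`. -/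
inductive FOCtx : Type where
  | hole
  | notC (μ : FOCtx)
  | orL (μ : FOCtx) (ψ : FOForm)
  | orR (φ : FOForm) (μ : FOCtx)
  | andL (μ : FOCtx) (ψ : FOForm)
  | andR (φ : FOForm) (μ : FOCtx)
  | exC (x : ℕ) (μ : FOCtx)
  | allC (x : ℕ) (μ : FOCtx)

/-- Substituting a formula for the placeholder of a context. -/
def FOCtx.subst : FOCtx → FOForm → FOForm
  | .hole, φ => φ
  | .notC μ, φ => .not (μ.subst φ)
  | .orL μ ψ, φ => .or (μ.subst φ) ψ
  | .orR χ μ, φ => .or χ (μ.subst φ)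
  | .andL μ ψ, φ => .and (μ.subst φ) ψ
  | .andR χ μ, φ => .and χ (μ.subst φ)
  | .exC x μ, φ => .ex x (μ.subst φ)
  | .allC x μ, φ => .all x (μ.subst φ)

/-- A fragment: a nonempty set of formulas satisfying the syntactic closure properties. -/
structure IsFragment (F : Set FOForm) : Prop where
  nonempty : F.Nonempty
  top_mem : ∀ (μ : FOCtx) (φ : FOForm), μ.subst φ ∈ F → μ.subst .top ∈ F
  bot_mem : ∀ (μ : FOCtx) (φ : FOForm), μ.subst φ ∈ F → μ.subst .bot ∈ F
  lab_mem : ∀ (μ : FOCtx) (φ : FOForm) (x a : ℕ), μ.subst φ ∈ F → μ.subst (.lab x a) ∈ F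
  or_mem : ∀ (μ : FOCtx) (φ ψ : FOForm),
    μ.subst (.or φ ψ) ∈ F ↔ μ.subst φ ∈ F ∧ μ.subst ψ ∈ F
  and_mem : ∀ (μ : FOCtx) (φ ψ : FOForm),
    μ.subst (.and φ ψ) ∈ F ↔ μ.subst φ ∈ F ∧ μ.subst ψ ∈ F
  negneg : ∀ (μ : FOCtx) (φ : FOForm), μ.subst (.not (.not φ)) ∈ F → μ.subst φ ∈ F
  ex_drop : ∀ (μ : FOCtx) (φ : FOForm) (x : ℕ),
    μ.subst (.ex x φ) ∈ F → x ∉ φ.FV → μ.subst φ ∈ F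
  all_drop : ∀ (μ : FOCtx) (φ : FOForm) (x : ℕ),
    μ.subst (.all x φ) ∈ F → x ∉ φ.FV → μ.subst φ ∈ F

/-- A fragment is order-stable if `μ(x<y) ∈ F ↔ μ(x≤y) ∈ F`. -/
def OrderStable (F : Set FOForm) : Prop :=
  ∀ (μ : FOCtx) (x y : ℕ), μ.subst (.lt x y) ∈ F ↔ μ.subst (.le x y) ∈ F

/-- A fragment is suc-stable if it satisfies the two closure conditions for `suc`, `min`, `max`, `empty`. -/
def SucStable (F : Set FOForm) : Prop :=
  (∀ (μ : FOCtx) (x y : ℕ), μ.subst (.suc x y) ∈ F →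
      μ.subst (.eq x y) ∈ F ∧ μ.subst (.fmax x) ∈ F ∧ μ.subst (.fmin y) ∈ F) ∧
  (∀ (μ : FOCtx) (x : ℕ), (μ.subst (.fmin x) ∈ F ∨ μ.subst (.fmax x) ∈ F) →
      μ.subst .empt ∈ F)

/-- The fragment has quantifier depth bounded by `n`. -/
def QDBoundedBy (F : Set FOForm) (n : ℕ) : Prop := ∀ φ ∈ F, φ.qd ≤ n

/-- Quantifiers, including the negated quantifiers. -/
inductive Quant : Type | qex | qall | qnex | qnall

def Quant.apply : Quant → ℕ → FOForm → FOForm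
  | .qex, x, φ => .ex x φ
  | .qall, x, φ => .all x φ
  | .qnex, x, φ => .not (.ex x φ)
  | .qnall, x, φ => .not (.all x φ)

/-- The reduct `Qx⁻¹F` of a set of formulas. -/
def reduct (Q : Quant) (x : ℕ) (F : Set FOForm) : Set FOForm := {φ | Q.apply x φ ∈ F}
/-! ### Generalized words -/

/-- A (countable) generalized word over the alphabet `ℕ`: a countable linear order
labeled by letters. Words are compared up to label-preserving order isomorphism
(`GWord.Iso`). -/
structure GWord : Type 1 where
  carrier : Type
  ord : LinearOrder carrier
  cnt : Countable carrier
  label : carrier → ℕ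

attribute [instance] GWord.ord GWord.cnt

/-- Label-preserving order isomorphism of generalized words. -/
def GWord.Iso (u v : GWord) : Prop :=
  ∃ f : u.carrier ≃o v.carrier, ∀ p : u.carrier, v.label (f p) = u.label p

/-- Satisfaction of a formula in a word under a (partial) valuation of the variables. -/
def GWord.Sat (u : GWord) : (ℕ → Option u.carrier) → FOForm → Prop
  | _, .top => True
  | _, .bot => False
  | _, .empt => IsEmpty u.carrier
  | α, .eq x y => ∃ p q : u.carrier, α x = some p ∧ α y = some q ∧ p = q
  | α, .lab x a => ∃ p : u.carrier, α x = some p ∧ u.label p = a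
  | α, .lt x y => ∃ p q : u.carrier, α x = some p ∧ α y = some q ∧ p < q
  | α, .le x y => ∃ p q : u.carrier, α x = some p ∧ α y = some q ∧ p ≤ q
  | α, .suc x y => ∃ p q : u.carrier, α x = some p ∧ α y = some q ∧ p < q ∧
      ∀ r : u.carrier, ¬ (p < r ∧ r < q)
  | α, .fmin x => ∃ p : u.carrier, α x = some p ∧ ∀ q : u.carrier, p ≤ q
  | α, .fmax x => ∃ p : u.carrier, α x = some p ∧ ∀ q : u.carrier, q ≤ p
  | α, .not φ => ¬ u.Sat α φ
  | α, .or φ ψ => u.Sat α φ ∨ u.Sat α ψ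
  | α, .and φ ψ => u.Sat α φ ∧ u.Sat α ψ
  | α, .ex x φ => ∃ p : u.carrier, u.Sat (fun y => if y = x then some p else α y) φ
  | α, .all x φ => ∀ p : u.carrier, u.Sat (fun y => if y = x then some p else α y) φ

/-- The empty valuation. -/
def emptyVal (u : GWord) : ℕ → Option u.carrier := fun _ => none

/-- A word satisfies a sentence. -/
def SatS (u : GWord) (φ : FOForm) : Prop := u.Sat (emptyVal u) φ

/-- Updating a valuation at a variable. -/
def updVal {u : GWord} (α : ℕ → Option u.carrier) (x : ℕ) (p : u.carrier) :
    ℕ → Option u.carrier :=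
  fun y => if y = x then some p else α y

/-- The domain of the valuation `α` is exactly the finite set `V`. -/
def ValDom {u : GWord} (α : ℕ → Option u.carrier) (V : Finset ℕ) : Prop :=
  ∀ x : ℕ, (α x).isSome ↔ x ∈ V

/-- A finite word, regarded as a generalized word. -/
def listToGWord (w : List ℕ) : GWord :=
  ⟨Fin w.length, inferInstance, inferInstance, w.get⟩

/-- Concatenation of generalized words. -/
def GWord.concat (u v : GWord) : GWord :=
  ⟨u.carrier ⊕ₗ v.carrier, inferInstance, inferInstance,
    fun p => Sum.elim u.label v.label (ofLex p)⟩

/-- The `τ`-power of a word, where `τ` is the order type of the countable linear order `T`: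
positions are pairs `(t, p)` ordered with the `T`-component dominant. -/
def GWord.pow (u : GWord) (T : Type) [LinearOrder T] [Countable T] : GWord :=
  ⟨T ×ₗ u.carrier, inferInstance, inferInstance, fun p => u.label (ofLex p).2⟩

/-- An index type of order type `ρ = ω + ζ·η + ω*`: a copy of `ℕ`, followed by `ℤ × ℚ`
ordered lexicographically with the `ℚ`-component dominant, followed by the negative
integers (the order dual of `ℕ`). -/
abbrev Rho : Type := (ℕ ⊕ₗ (ℚ ×ₗ ℤ)) ⊕ₗ ℕᵒᵈ

/-- ρ-rational words: built from finite words by concatenation and ρ-power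
(closed under isomorphism, since words are identified up to isomorphism). -/
inductive RhoRational : GWord → Prop where
  | fin (w : List ℕ) : RhoRational (listToGWord w)
  | concat {u v : GWord} : RhoRational u → RhoRational v → RhoRational (u.concat v)
  | rpow {u : GWord} : RhoRational u → RhoRational (u.pow Rho)
  | iso {u v : GWord} : RhoRational u → GWord.Iso u v → RhoRational v
/-! ### The `F`-game -/

/-- A configuration of the `F`-game: a set of formulas (an iterated reduct of the
original fragment) together with two valuations on two words. -/
structure Config : Type 1 where
  frag : Set FOForm
  w1 : GWord
  w2 : GWord
  val1 : ℕ → Option w1.carrier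
  val2 : ℕ → Option w2.carrier

/-- Spoiler's winning condition: the configuration contains a literal with free variables
inside the valuation domain, satisfied in the first valuation but not in the second. -/
def SpoilerWinsNow (C : Config) : Prop :=
  ∃ φ ∈ C.frag, φ.IsLiteral ∧ (∀ y ∈ φ.FV, (C.val1 y).isSome) ∧
    C.w1.Sat C.val1 φ ∧ ¬ C.w2.Sat C.val2 φ

/-- A set of configurations is a (Duplicator-)safe invariant: no configuration in it is
immediately winning for Spoiler, and for every move of Spoiler (a quantifier `Q`, a
variable `x` with nonempty reduct, and a quest `q` in the appropriate word) Duplicator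
has a reply `r` leading back into the set (the valuations are swapped for negated
quantifiers). -/
def SafeInv (Good : Set Config) : Prop :=
  ∀ D ∈ Good,
    (¬ SpoilerWinsNow D) ∧
    (∀ x : ℕ, (reduct .qex x D.frag).Nonempty →
      ∀ q : D.w1.carrier, ∃ r : D.w2.carrier,
        (⟨reduct .qex x D.frag, D.w1, D.w2, updVal D.val1 x q, updVal D.val2 x r⟩ : Config) ∈ Good) ∧
    (∀ x : ℕ, (reduct .qall x D.frag).Nonempty →
      ∀ q : D.w2.carrier, ∃ r : D.w1.carrier,
        (⟨reduct .qall x D.frag, D.w1, D.w2, updVal D.val1 x r, updVal D.val2 x q⟩ : Config) ∈ Good) ∧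
    (∀ x : ℕ, (reduct .qnex x D.frag).Nonempty →
      ∀ q : D.w2.carrier, ∃ r : D.w1.carrier,
        (⟨reduct .qnex x D.frag, D.w2, D.w1, updVal D.val2 x q, updVal D.val1 x r⟩ : Config) ∈ Good) ∧
    (∀ x : ℕ, (reduct .qnall x D.frag).Nonempty →
      ∀ q : D.w1.carrier, ∃ r : D.w2.carrier,
        (⟨reduct .qnall x D.frag, D.w2, D.w1, updVal D.val2 x r, updVal D.val1 x q⟩ : Config) ∈ Good)

/-- Duplicator has a winning strategy from a configuration of this (possibly infinite)
safety game iff some safe invariant contains the configuration. -/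
def DuplicatorWins (C : Config) : Prop :=
  ∃ Good : Set Config, C ∈ Good ∧ SafeInv Good

/-- Duplicator has a winning strategy in the `F`-game on `(u, v)` (from the initial
configuration with empty valuations). -/
def DuplicatorWinsGame (F : Set FOForm) (u v : GWord) : Prop :=
  DuplicatorWins ⟨F, u, v, fun _ => none, fun _ => none⟩

/-- Spoiler has a winning strategy: either the current configuration is already winning
for Spoiler, or Spoiler has a move such that every reply of Duplicator (in particular,
no possible reply) leads to a configuration where Spoiler wins. -/
inductive SpoilerWins : Config → Prop where
  | now {C : Config} : SpoilerWinsNow C → SpoilerWins C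
  | mex {C : Config} (x : ℕ) (h : (reduct .qex x C.frag).Nonempty) (q : C.w1.carrier)
      (h2 : ∀ r : C.w2.carrier, SpoilerWins
        ⟨reduct .qex x C.frag, C.w1, C.w2, updVal C.val1 x q, updVal C.val2 x r⟩) :
      SpoilerWins C

/-! ### π-terms and their interpretations -/

/-- π-terms over the alphabet `ℕ` (elements of the free π-algebra). -/
inductive PiTerm : Type where
  | letter (a : ℕ)
  | mul (s t : PiTerm)
  | pi (s : PiTerm)

/-- The interpretation `⟦·⟧_ρ` of π-terms as generalized words: letters become
single-position words, products concatenations, and the π-power the ρ-power. -/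
def PiTerm.evalRho : PiTerm → GWord
  | .letter a => listToGWord [a]
  | .mul s t => s.evalRho.concat t.evalRho
  | .pi s => s.evalRho.pow Rho

/-- The interpretation `⟦·⟧_m` of π-terms as finite words: the π-power becomes
the `m`-fold concatenation power. -/
def PiTerm.evalFin (m : ℕ) : PiTerm → GWord
  | .letter a => listToGWord [a]
  | .mul s t => (s.evalFin m).concat (t.evalFin m)
  | .pi s => (s.evalFin m).pow (Fin m)

/-- `mpow u k = u^(k+1)`: positive powers in any semigroup (or magma). -/
def mpow {M : Type} [Mul M] (u : M) : ℕ → M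
  | 0 => u
  | k+1 => mpow u k * u

/-- `k+1` is an idempotency exponent of `M`: `u^(k+1)` is idempotent for every `u`. -/
def IsIdemExpnt (M : Type) [Mul M] (k : ℕ) : Prop :=
  ∀ u : M, mpow u k * mpow u k = mpow u k

/-- Evaluation of a π-term in `M` under a letter assignment `h`, interpreting the
π-power as the `(k+1)`-st power. -/
def PiTerm.evalMul {M : Type} [Mul M] (h : ℕ → M) (k : ℕ) : PiTerm → M
  | .letter a => h a
  | .mul s t => (s.evalMul h k) * (t.evalMul h k)
  | .pi s => mpow (s.evalMul h k) k

/-- The identity `s = t` of π-terms holds in `M`: for every assignment of the letters and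
every idempotency exponent (i.e. interpreting `(·)^π` as the idempotent power), the two
terms evaluate equally. -/
def PiIdentityHolds (M : Type) [Mul M] (s t : PiTerm) : Prop :=
  ∀ (h : ℕ → M) (k : ℕ), IsIdemExpnt M k → s.evalMul h k = t.evalMul h k

/-! ### Languages, definability and syntactic monoids/semigroups -/

/-- All letters of the finite word `w` belong to the alphabet `A`. -/
def InAlph (A : Finset ℕ) (w : FreeMonoid ℕ) : Prop :=
  ∀ a ∈ FreeMonoid.toList w, a ∈ A

/-- A finite word, regarded as a generalized word. -/
def wordToGWord (w : FreeMonoid ℕ) : GWord := listToGWord (FreeMonoid.toList w)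

/-- The submonoid `A* ⊆ Λ*` of words over the finite alphabet `A`. -/
def wordsOver (A : Finset ℕ) : Submonoid (FreeMonoid ℕ) where
  carrier := {w | InAlph A w}
  mul_mem' := by
    intro u v hu hv a ha
    rw [FreeMonoid.toList_mul] at ha
    rcases List.mem_append.mp ha with h | h
    exacts [hu a h, hv a h]
  one_mem' := by
    intro a ha
    simp [FreeMonoid.toList_one] at ha

/-- The single-letter word `a ∈ A*`. -/
def letterWord (A : Finset ℕ) (a : ℕ) (ha : a ∈ A) : ↥(wordsOver A) :=
  ⟨FreeMonoid.of a, by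
    intro b hb
    rw [FreeMonoid.toList_of] at hb
    rcases List.mem_singleton.mp hb with rfl
    exact ha⟩

/-- The language over `A` defined by the sentence `φ`. -/
def LangOf (A : Finset ℕ) (φ : FOForm) : Set (FreeMonoid ℕ) :=
  {w | InAlph A w ∧ SatS (wordToGWord w) φ}

/-- `L ⊆ A*` is definable in `F` over the alphabet `A`. -/
def DefinableIn (F : Set FOForm) (A : Finset ℕ) (L : Set (FreeMonoid ℕ)) : Prop :=
  ∃ φ ∈ F, φ.IsSentence ∧ L = LangOf A φ

/-- The syntactic congruence of `L` on `A*`: `u ≡_L v` iff `xuy ∈ L ⇔ xvy ∈ L` for all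
contexts `x, y ∈ A*`. -/
def synCon (A : Finset ℕ) (L : Set (FreeMonoid ℕ)) : Con ↥(wordsOver A) where
  r u v := ∀ x y : FreeMonoid ℕ, InAlph A x → InAlph A y →
    ((x * ↑u * y ∈ L) ↔ (x * ↑v * y ∈ L))
  iseqv := ⟨fun _ _ _ _ _ => Iff.rfl,
    fun h x y hx hy => (h x y hx hy).symm,
    fun h1 h2 x y hx hy => (h1 x y hx hy).trans (h2 x y hx hy)⟩
  mul' := by
    intro w x y z h1 h2 a b ha hb
    have hyb : InAlph A ((y : FreeMonoid ℕ) * b) := by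
      intro c hc
      rw [FreeMonoid.toList_mul] at hc
      rcases List.mem_append.mp hc with h | h
      exacts [y.2 c h, hb c h]
    have hax : InAlph A (a * (x : FreeMonoid ℕ)) := by
      intro c hc
      rw [FreeMonoid.toList_mul] at hc
      rcases List.mem_append.mp hc with h | h
      exacts [ha c h, x.2 c h]
    have e1 : a * ↑(w * y) * b = a * (w : FreeMonoid ℕ) * (↑y * b) := by
      push_cast; simp [mul_assoc]
    have e2 : a * (x : FreeMonoid ℕ) * (↑y * b) = (a * ↑x) * ↑y * b := by
      simp [mul_assoc]
    have e3 : (a * (x : FreeMonoid ℕ)) * ↑z * b = a * ↑(x * z) * b := by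
      push_cast; simp [mul_assoc]
    rw [e1, h1 a (↑y * b) ha hyb, e2, h2 (a * ↑x) b hax hb, e3]

/-- The syntactic monoid `M_L = A*/≡_L`. -/
def SynMonoid (A : Finset ℕ) (L : Set (FreeMonoid ℕ)) : Type := (synCon A L).Quotient

instance (A : Finset ℕ) (L : Set (FreeMonoid ℕ)) : Monoid (SynMonoid A L) :=
  inferInstanceAs (Monoid (synCon A L).Quotient)

/-- The subsemigroup `A⁺ ⊆ Λ*` of nonempty words over the finite alphabet `A`. -/
def plusWordsOver (A : Finset ℕ) : Subsemigroup (FreeMonoid ℕ) where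
  carrier := {w | w ≠ 1 ∧ InAlph A w}
  mul_mem' := by
    intro u v hu hv
    refine ⟨?_, ?_⟩
    · intro h
      apply hu.1
      have : FreeMonoid.toList (u * v) = FreeMonoid.toList (1 : FreeMonoid ℕ) := by rw [h]
      rw [FreeMonoid.toList_mul, FreeMonoid.toList_one] at this
      exact (List.append_eq_nil_iff.mp this).1
    · intro a ha
      rw [FreeMonoid.toList_mul] at ha
      rcases List.mem_append.mp ha with h | h
      exacts [hu.2 a h, hv.2 a h]

/-- The syntactic congruence of `L ⊆ A⁺` on `A⁺` (contexts range over `A*`). -/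
def synConS (A : Finset ℕ) (L : Set (FreeMonoid ℕ)) : Con ↥(plusWordsOver A) where
  r u v := ∀ x y : FreeMonoid ℕ, InAlph A x → InAlph A y →
    ((x * ↑u * y ∈ L) ↔ (x * ↑v * y ∈ L))
  iseqv := ⟨fun _ _ _ _ _ => Iff.rfl,
    fun h x y hx hy => (h x y hx hy).symm,
    fun h1 h2 x y hx hy => (h1 x y hx hy).trans (h2 x y hx hy)⟩
  mul' := by
    intro w x y z h1 h2 a b ha hb
    have hyb : InAlph A ((y : FreeMonoid ℕ) * b) := by
      intro c hc
      rw [FreeMonoid.toList_mul] at hc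
      rcases List.mem_append.mp hc with h | h
      exacts [y.2.2 c h, hb c h]
    have hax : InAlph A (a * (x : FreeMonoid ℕ)) := by
      intro c hc
      rw [FreeMonoid.toList_mul] at hc
      rcases List.mem_append.mp hc with h | h
      exacts [ha c h, x.2.2 c h]
    have e1 : a * ↑(w * y) * b = a * (w : FreeMonoid ℕ) * (↑y * b) := by
      push_cast; simp [mul_assoc]
    have e2 : a * (x : FreeMonoid ℕ) * (↑y * b) = (a * ↑x) * ↑y * b := by
      simp [mul_assoc]
    have e3 : (a * (x : FreeMonoid ℕ)) * ↑z * b = a * ↑(x * z) * b := by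
      push_cast; simp [mul_assoc]
    rw [e1, h1 a (↑y * b) ha hyb, e2, h2 (a * ↑x) b hax hb, e3]

/-- The syntactic semigroup of `L ⊆ A⁺`. -/
def SynSemigroup (A : Finset ℕ) (L : Set (FreeMonoid ℕ)) : Type := (synConS A L).Quotient

instance (A : Finset ℕ) (L : Set (FreeMonoid ℕ)) : Semigroup (SynSemigroup A L) :=
  inferInstanceAs (Semigroup (synConS A L).Quotient)

/-- The language of nonempty words over `A` defined by the sentence `φ`. -/
def LangOfPlus (A : Finset ℕ) (φ : FOForm) : Set (FreeMonoid ℕ) :=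
  {w | w ≠ 1 ∧ InAlph A w ∧ SatS (wordToGWord w) φ}

/-- `L ⊆ A⁺` is definable in `F` over the alphabet `A`, over nonempty words. -/
def DefinablePlusIn (F : Set FOForm) (A : Finset ℕ) (L : Set (FreeMonoid ℕ)) : Prop :=
  ∃ φ ∈ F, φ.IsSentence ∧ L = LangOfPlus A φ

/-! ### Concatenation of finite families and unions of valuations -/

/-- Concatenation of a finite family of words `u 0, u 1, …, u (k-1)` (in this order). -/
def GWord.concatFam {k : ℕ} (u : Fin k → GWord) : GWord :=
  ⟨Σₗ i : Fin k, (u i).carrier, inferInstance,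
    inferInstanceAs (Countable (Lex (Σ i : Fin k, (u i).carrier))),
    fun p => (u (ofLex p).1).label (ofLex p).2⟩

/-- The union of a family of valuations with (mutually disjoint) domains, as a valuation
on the concatenation. -/
def combineVal {k : ℕ} (u : Fin k → GWord) (α : ∀ i : Fin k, ℕ → Option (u i).carrier)
    (x : ℕ) : Option (GWord.concatFam u).carrier :=
  (List.finRange k).findSome? fun i => ((α i x).map fun p => toLex ⟨i, p⟩)
set_option linter.unusedSectionVars false
set_option linter.dupNamespace false

/-- Composition of contexts: fill the hole of `μ` with `ν`. -/
def FOCtx.comp : FOCtx → FOCtx → FOCtx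
  | .hole, ν => ν
  | .notC μ, ν => .notC (μ.comp ν)
  | .orL μ ψ, ν => .orL (μ.comp ν) ψ
  | .orR φ μ, ν => .orR φ (μ.comp ν)
  | .andL μ ψ, ν => .andL (μ.comp ν) ψ
  | .andR φ μ, ν => .andR φ (μ.comp ν)
  | .exC x μ, ν => .exC x (μ.comp ν)
  | .allC x μ, ν => .allC x (μ.comp ν)

lemma FOCtx.comp_subst (μ ν : FOCtx) (φ : FOForm) :
    (μ.comp ν).subst φ = μ.subst (ν.subst φ) := by
  induction μ <;> simp [FOCtx.comp, FOCtx.subst, *]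

/-- The context corresponding to a (possibly negated) quantifier. -/
def qCtx : Quant → ℕ → FOCtx
  | .qex, x => .exC x .hole
  | .qall, x => .allC x .hole
  | .qnex, x => .notC (.exC x .hole)
  | .qnall, x => .notC (.allC x .hole)

lemma qCtx_subst (Q : Quant) (x : ℕ) (φ : FOForm) :
    (qCtx Q x).subst φ = Q.apply x φ := by
  cases Q <;> rfl

lemma mem_reduct {Q : Quant} {x : ℕ} {G : Set FOForm} {φ : FOForm} :
    φ ∈ reduct Q x G ↔ (qCtx Q x).subst φ ∈ G := by
  rw [qCtx_subst]; rfl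

lemma reduct_mono {Q : Quant} {x : ℕ} {G H : Set FOForm} (h : G ⊆ H) :
    reduct Q x G ⊆ reduct Q x H := fun _ hφ => h hφ

/-- The context-closure properties of fragments that survive taking reducts. -/
structure CtxP (G : Set FOForm) : Prop where
  top : ∀ (μ : FOCtx) (φ : FOForm), μ.subst φ ∈ G → μ.subst .top ∈ G
  negneg : ∀ (μ : FOCtx) (φ : FOForm), μ.subst (.not (.not φ)) ∈ G → μ.subst φ ∈ G
  exd : ∀ (μ : FOCtx) (φ : FOForm) (x : ℕ), μ.subst (.ex x φ) ∈ G → x ∉ φ.FV → μ.subst φ ∈ G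
  alld : ∀ (μ : FOCtx) (φ : FOForm) (x : ℕ), μ.subst (.all x φ) ∈ G → x ∉ φ.FV → μ.subst φ ∈ G

lemma CtxP.ofFragment {F : Set FOForm} (hF : IsFragment F) : CtxP F :=
  ⟨hF.top_mem, hF.negneg, hF.ex_drop, hF.all_drop⟩

lemma CtxP.reduct {G : Set FOForm} (hG : CtxP G) (Q : Quant) (x : ℕ) :
    CtxP (EFGames.reduct Q x G) := by
  constructor
  · intro μ φ h
    rw [mem_reduct, ← FOCtx.comp_subst] at h ⊢
    exact hG.top _ _ h
  · intro μ φ h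
    rw [mem_reduct, ← FOCtx.comp_subst] at h ⊢
    exact hG.negneg _ _ h
  · intro μ φ y h hy
    rw [mem_reduct, ← FOCtx.comp_subst] at h ⊢
    exact hG.exd _ _ y h hy
  · intro μ φ y h hy
    rw [mem_reduct, ← FOCtx.comp_subst] at h ⊢
    exact hG.alld _ _ y h hy

lemma SucStable.reduct {G : Set FOForm} (hG : SucStable G) (Q : Quant) (x : ℕ) :
    SucStable (EFGames.reduct Q x G) := by
  constructor
  · intro μ y z h
    rw [mem_reduct, ← FOCtx.comp_subst] at h
    obtain ⟨h1, h2, h3⟩ := hG.1 _ y z h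
    refine ⟨?_, ?_, ?_⟩ <;> rw [mem_reduct, ← FOCtx.comp_subst]
    exacts [h1, h2, h3]
  · intro μ y h
    rw [mem_reduct, ← FOCtx.comp_subst]
    apply hG.2 ((qCtx Q x).comp μ) y
    rcases h with h | h <;> rw [mem_reduct, ← FOCtx.comp_subst] at h
    · exact Or.inl h
    · exact Or.inr h

-- closed-formula stripping lemmas
lemma strip_qex {G : Set FOForm} (hG : CtxP G) {χ : FOForm} (hχ : χ.FV = ∅) {x : ℕ}
    (h : χ ∈ reduct .qex x G) : χ ∈ G :=
  hG.exd .hole χ x h (by simp [hχ])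

lemma strip_qall {G : Set FOForm} (hG : CtxP G) {χ : FOForm} (hχ : χ.FV = ∅) {x : ℕ}
    (h : χ ∈ reduct .qall x G) : χ ∈ G :=
  hG.alld .hole χ x h (by simp [hχ])

lemma strip_qnex {G : Set FOForm} (hG : CtxP G) {χ : FOForm} (hχ : χ.FV = ∅) {x : ℕ}
    (h : χ ∈ reduct .qnex x G) : FOForm.not χ ∈ G :=
  hG.exd (.notC .hole) χ x h (by simp [hχ])

lemma strip_qnall {G : Set FOForm} (hG : CtxP G) {χ : FOForm} (hχ : χ.FV = ∅) {x : ℕ}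
    (h : χ ∈ reduct .qnall x G) : FOForm.not χ ∈ G :=
  hG.alld (.notC .hole) χ x h (by simp [hχ])

lemma unnot {G : Set FOForm} (hG : CtxP G) {χ : FOForm}
    (h : FOForm.not (.not χ) ∈ G) : χ ∈ G :=
  hG.negneg .hole χ h

-- FV computations for the closed formulas we use
lemma fv_empt : (FOForm.empt).FV = ∅ := rfl
lemma fv_not (φ : FOForm) : (FOForm.not φ).FV = φ.FV := rfl
lemma fv_top : (FOForm.top).FV = ∅ := rfl
lemma fv_nempt : (FOForm.not .empt).FV = ∅ := rfl
lemma fv_allT (x : ℕ) : (FOForm.all x .top).FV = ∅ := by simp [FOForm.FV]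
lemma fv_exT (x : ℕ) : (FOForm.ex x .top).FV = ∅ := by simp [FOForm.FV]
lemma fv_nallT (x : ℕ) : (FOForm.not (.all x .top)).FV = ∅ := by simp [FOForm.FV]
lemma fv_nexT (x : ℕ) : (FOForm.not (.ex x .top)).FV = ∅ := by simp [FOForm.FV]
set_option linter.unusedSectionVars false
section Sem
variable {k : ℕ} {α : Fin k → Type} [∀ i, LinearOrder (α i)]

lemma lex_lt_fst {i j : Fin k} (p : α i) (q : α j) (h : i < j) :
    (toLex ⟨i,p⟩ : Σₗ m, α m) < toLex ⟨j,q⟩ := by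
  rw [Sigma.Lex.lt_def]; exact Or.inl h

lemma lex_lt_snd {i : Fin k} {p q : α i} (h : p < q) :
    (toLex ⟨i,p⟩ : Σₗ m, α m) < toLex ⟨i,q⟩ := by
  rw [Sigma.Lex.lt_def]; exact Or.inr ⟨rfl, h⟩

lemma lex_le_snd {i : Fin k} {p q : α i} (h : p ≤ q) :
    (toLex ⟨i,p⟩ : Σₗ m, α m) ≤ toLex ⟨i,q⟩ := by
  rw [Sigma.Lex.le_def]; exact Or.inr ⟨rfl, h⟩

lemma lex_fst_le_of_lt {i j : Fin k} {p : α i} {q : α j}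
    (h : (toLex ⟨i,p⟩ : Σₗ m, α m) < toLex ⟨j,q⟩) : i ≤ j := by
  rw [Sigma.Lex.lt_def] at h
  rcases h with h | ⟨h, _⟩
  · exact h.le
  · exact le_of_eq h

lemma lex_fst_le_of_le {i j : Fin k} {p : α i} {q : α j}
    (h : (toLex ⟨i,p⟩ : Σₗ m, α m) ≤ toLex ⟨j,q⟩) : i ≤ j := by
  rw [Sigma.Lex.le_def] at h
  rcases h with h | ⟨h, _⟩
  · exact h.le
  · exact le_of_eq h

lemma lex_snd_lt_of_lt {i : Fin k} {p q : α i}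
    (h : (toLex ⟨i,p⟩ : Σₗ m, α m) < toLex ⟨i,q⟩) : p < q := by
  by_contra hc
  exact absurd (lex_le_snd (not_lt.mp hc)) (not_le.mpr h)

lemma lex_snd_le_of_le {i : Fin k} {p q : α i}
    (h : (toLex ⟨i,p⟩ : Σₗ m, α m) ≤ toLex ⟨i,q⟩) : p ≤ q := by
  by_contra hc
  exact absurd (lex_lt_snd (not_le.mp hc)) (not_lt.mpr h)

lemma lex_inj_fst {i j : Fin k} {p : α i} {q : α j}
    (h : (toLex ⟨i,p⟩ : Σₗ m, α m) = toLex ⟨j,q⟩) : i = j := by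
  have := congrArg (fun z : Σₗ m, α m => (ofLex z).1) h
  simpa using this

lemma lex_inj_snd {i : Fin k} {p q : α i}
    (h : (toLex ⟨i,p⟩ : Σₗ m, α m) = toLex ⟨i,q⟩) : p = q := by
  have h2 : (⟨i,p⟩ : Σ m, α m) = ⟨i,q⟩ := h
  simpa using h2

end Sem

section Sem2
variable {k : ℕ}

/-- Embedding of a component position into the concatenation. -/
def inj (w : Fin k → GWord) (i : Fin k) (p : (w i).carrier) : (GWord.concatFam w).carrier :=
  (toLex ⟨i, p⟩ : Σₗ m, (w m).carrier)

variable {w : Fin k → GWord}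

lemma inj_repr (r : (GWord.concatFam w).carrier) : ∃ m s, r = inj w m s :=
  ⟨(ofLex (show Σₗ m, (w m).carrier from r)).1, (ofLex (show Σₗ m, (w m).carrier from r)).2, rfl⟩

lemma inj_label (i : Fin k) (p : (w i).carrier) :
    (GWord.concatFam w).label (inj w i p) = (w i).label p := rfl

lemma inj_isempty (h : IsEmpty (GWord.concatFam w).carrier) (m : Fin k) : IsEmpty (w m).carrier :=
  ⟨fun p => h.false (inj w m p)⟩

lemma inj_nonempty {i : Fin k} (p : (w i).carrier) : ¬ IsEmpty (GWord.concatFam w).carrier := by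
  intro h; exact h.false (inj w _ p)

lemma inj_lt_fst {i j : Fin k} (p : (w i).carrier) (q : (w j).carrier) (h : i < j) :
    inj w i p < inj w j q := @lex_lt_fst k (fun m => (w m).carrier) (fun m => (w m).ord) i j p q h

lemma inj_lt_snd {i : Fin k} {p q : (w i).carrier} (h : p < q) :
    inj w i p < inj w i q := @lex_lt_snd k (fun m => (w m).carrier) (fun m => (w m).ord) i p q h

lemma inj_le_snd {i : Fin k} {p q : (w i).carrier} (h : p ≤ q) :
    inj w i p ≤ inj w i q := @lex_le_snd k (fun m => (w m).carrier) (fun m => (w m).ord) i p q h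

lemma inj_fst_le_of_lt {i j : Fin k} {p : (w i).carrier} {q : (w j).carrier}
    (h : inj w i p < inj w j q) : i ≤ j := @lex_fst_le_of_lt k (fun m => (w m).carrier) (fun m => (w m).ord) i j p q h

lemma inj_fst_le_of_le {i j : Fin k} {p : (w i).carrier} {q : (w j).carrier}
    (h : inj w i p ≤ inj w j q) : i ≤ j := @lex_fst_le_of_le k (fun m => (w m).carrier) (fun m => (w m).ord) i j p q h

lemma inj_snd_lt_of_lt {i : Fin k} {p q : (w i).carrier}
    (h : inj w i p < inj w i q) : p < q := @lex_snd_lt_of_lt k (fun m => (w m).carrier) (fun m => (w m).ord) i p q h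

lemma inj_snd_le_of_le {i : Fin k} {p q : (w i).carrier}
    (h : inj w i p ≤ inj w i q) : p ≤ q := @lex_snd_le_of_le k (fun m => (w m).carrier) (fun m => (w m).ord) i p q h

lemma inj_inj_fst {i j : Fin k} {p : (w i).carrier} {q : (w j).carrier}
    (h : inj w i p = inj w j q) : i = j := @lex_inj_fst k (fun m => (w m).carrier) (fun m => (w m).ord) i j p q h

lemma inj_inj_snd {i : Fin k} {p q : (w i).carrier}
    (h : inj w i p = inj w i q) : p = q := @lex_inj_snd k (fun m => (w m).carrier) (fun m => (w m).ord) i p q h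

end Sem2
section Cond
variable {G G' H : Set FOForm} {U₁ U₂ : GWord} {x : ℕ}

/-- No quantifier move of the combined game is compatible with this component having
positions on the corresponding side. -/
def LCond (G : Set FOForm) (U₁ U₂ : GWord) : Prop :=
  (∀ (y : ℕ) (φ : FOForm), FOForm.all y φ ∈ G → U₂.carrier → False) ∧
  (∀ (y : ℕ) (φ : FOForm), FOForm.not (.ex y φ) ∈ G → U₂.carrier → False) ∧
  (∀ (y : ℕ) (φ : FOForm), FOForm.ex y φ ∈ G → U₁.carrier → False) ∧
  (∀ (y : ℕ) (φ : FOForm), FOForm.not (.all y φ) ∈ G → U₁.carrier → False)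

def EmptImp (G H : Set FOForm) : Prop :=
  (FOForm.empt ∈ G → FOForm.empt ∈ H) ∧ (FOForm.not .empt ∈ G → FOForm.not .empt ∈ H)

def EmptImpRev (G H : Set FOForm) : Prop :=
  (FOForm.empt ∈ G → FOForm.not .empt ∈ H) ∧ (FOForm.not .empt ∈ G → FOForm.empt ∈ H)

lemma EmptImp_of_subset (h : G ⊆ H) : EmptImp G H := ⟨fun a => h a, fun a => h a⟩

-- ⊤-normalization of quantified members
lemma norm_all {y : ℕ} {φ : FOForm} (hG : CtxP G) (h : FOForm.all y φ ∈ G) :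
    FOForm.all y .top ∈ G := hG.top (.allC y .hole) φ h
lemma norm_ex {y : ℕ} {φ : FOForm} (hG : CtxP G) (h : FOForm.ex y φ ∈ G) :
    FOForm.ex y .top ∈ G := hG.top (.exC y .hole) φ h
lemma norm_nall {y : ℕ} {φ : FOForm} (hG : CtxP G) (h : FOForm.not (.all y φ) ∈ G) :
    FOForm.not (.all y .top) ∈ G := hG.top (.notC (.allC y .hole)) φ h
lemma norm_nex {y : ℕ} {φ : FOForm} (hG : CtxP G) (h : FOForm.not (.ex y φ) ∈ G) :
    FOForm.not (.ex y .top) ∈ G := hG.top (.notC (.exC y .hole)) φ h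

lemma LCond_qex (hG : CtxP G) (h : LCond G U₁ U₂) : LCond (reduct .qex x G) U₁ U₂ := by
  have hG' := hG.reduct .qex x
  refine ⟨fun y φ hφ q => ?_, fun y φ hφ q => ?_, fun y φ hφ q => ?_, fun y φ hφ q => ?_⟩
  · exact h.1 y .top (strip_qex hG (fv_allT y) (norm_all hG' hφ)) q
  · exact h.2.1 y .top (strip_qex hG (fv_exT y) (norm_nex hG' hφ)) q
  · exact h.2.2.1 y .top (strip_qex hG (fv_exT y) (norm_ex hG' hφ)) q
  · exact h.2.2.2 y .top (strip_qex hG (fv_allT y) (norm_nall hG' hφ)) q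

lemma LCond_qall (hG : CtxP G) (h : LCond G U₁ U₂) : LCond (reduct .qall x G) U₁ U₂ := by
  have hG' := hG.reduct .qall x
  refine ⟨fun y φ hφ q => ?_, fun y φ hφ q => ?_, fun y φ hφ q => ?_, fun y φ hφ q => ?_⟩
  · exact h.1 y .top (strip_qall hG (fv_allT y) (norm_all hG' hφ)) q
  · exact h.2.1 y .top (strip_qall hG (fv_exT y) (norm_nex hG' hφ)) q
  · exact h.2.2.1 y .top (strip_qall hG (fv_exT y) (norm_ex hG' hφ)) q
  · exact h.2.2.2 y .top (strip_qall hG (fv_allT y) (norm_nall hG' hφ)) q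

lemma LCond_qnex (hG : CtxP G) (h : LCond G U₁ U₂) : LCond (reduct .qnex x G) U₂ U₁ := by
  have hG' := hG.reduct .qnex x
  refine ⟨fun y φ hφ q => ?_, fun y φ hφ q => ?_, fun y φ hφ q => ?_, fun y φ hφ q => ?_⟩
  · exact h.2.2.2 y .top (strip_qnex hG (fv_allT y) (norm_all hG' hφ)) q
  · exact h.2.2.1 y .top (unnot hG (strip_qnex hG (fv_nexT y) (norm_nex hG' hφ))) q
  · exact h.2.1 y .top (strip_qnex hG (fv_exT y) (norm_ex hG' hφ)) q
  · exact h.1 y .top (unnot hG (strip_qnex hG (fv_nallT y) (norm_nall hG' hφ))) q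

lemma LCond_qnall (hG : CtxP G) (h : LCond G U₁ U₂) : LCond (reduct .qnall x G) U₂ U₁ := by
  have hG' := hG.reduct .qnall x
  refine ⟨fun y φ hφ q => ?_, fun y φ hφ q => ?_, fun y φ hφ q => ?_, fun y φ hφ q => ?_⟩
  · exact h.2.2.2 y .top (strip_qnall hG (fv_allT y) (norm_all hG' hφ)) q
  · exact h.2.2.1 y .top (unnot hG (strip_qnall hG (fv_nexT y) (norm_nex hG' hφ))) q
  · exact h.2.1 y .top (strip_qnall hG (fv_exT y) (norm_ex hG' hφ)) q
  · exact h.1 y .top (unnot hG (strip_qnall hG (fv_nallT y) (norm_nall hG' hφ))) q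

lemma EmptImp_qex (hG : CtxP G) (h : EmptImp G H) : EmptImp (reduct .qex x G) H :=
  ⟨fun he => h.1 (strip_qex hG fv_empt he), fun he => h.2 (strip_qex hG fv_nempt he)⟩
lemma EmptImp_qall (hG : CtxP G) (h : EmptImp G H) : EmptImp (reduct .qall x G) H :=
  ⟨fun he => h.1 (strip_qall hG fv_empt he), fun he => h.2 (strip_qall hG fv_nempt he)⟩
lemma EmptImp_qnex (hG : CtxP G) (h : EmptImp G H) : EmptImpRev (reduct .qnex x G) H :=
  ⟨fun he => h.2 (strip_qnex hG fv_empt he),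
   fun he => h.1 (unnot hG (strip_qnex hG fv_nempt he))⟩
lemma EmptImp_qnall (hG : CtxP G) (h : EmptImp G H) : EmptImpRev (reduct .qnall x G) H :=
  ⟨fun he => h.2 (strip_qnall hG fv_empt he),
   fun he => h.1 (unnot hG (strip_qnall hG fv_nempt he))⟩
lemma EmptImpRev_qex (hG : CtxP G) (h : EmptImpRev G H) : EmptImpRev (reduct .qex x G) H :=
  ⟨fun he => h.1 (strip_qex hG fv_empt he), fun he => h.2 (strip_qex hG fv_nempt he)⟩
lemma EmptImpRev_qall (hG : CtxP G) (h : EmptImpRev G H) : EmptImpRev (reduct .qall x G) H :=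
  ⟨fun he => h.1 (strip_qall hG fv_empt he), fun he => h.2 (strip_qall hG fv_nempt he)⟩
lemma EmptImpRev_qnex (hG : CtxP G) (h : EmptImpRev G H) : EmptImp (reduct .qnex x G) H :=
  ⟨fun he => h.2 (strip_qnex hG fv_empt he),
   fun he => h.1 (unnot hG (strip_qnex hG fv_nempt he))⟩
lemma EmptImpRev_qnall (hG : CtxP G) (h : EmptImpRev G H) : EmptImp (reduct .qnall x G) H :=
  ⟨fun he => h.2 (strip_qnall hG fv_empt he),
   fun he => h.1 (unnot hG (strip_qnall hG fv_nempt he))⟩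

-- Demotion lemmas: a tracked component whose quest side is empty satisfies `LCond`
-- for the new reduct.
variable {Gd : Set Config} {γ : ℕ → Option U₁.carrier} {γ' : ℕ → Option U₂.carrier}

lemma demote_qex (hsafe : SafeInv Gd) (hmem : (⟨H, U₁, U₂, γ, γ'⟩ : Config) ∈ Gd)
    (hsub : G ⊆ H) (hH : CtxP H) (hG : CtxP G) (hemp : IsEmpty U₁.carrier) :
    LCond (reduct .qex x G) U₁ U₂ := by
  have hG' := hG.reduct .qex x
  refine ⟨fun y φ hφ q => ?_, fun y φ hφ q => ?_, fun y φ hφ q => hemp.false q,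
    fun y φ hφ q => hemp.false q⟩
  · have h1 : FOForm.all y .top ∈ H :=
      hH.exd .hole _ x (hsub (norm_all hG' hφ)) (by simp [fv_allT])
    obtain ⟨r, -⟩ := (hsafe _ hmem).2.2.1 y ⟨.top, h1⟩ q
    exact hemp.false r
  · have h1 : FOForm.not (.ex y .top) ∈ H :=
      hH.exd .hole _ x (hsub (norm_nex hG' hφ)) (by simp [fv_nexT])
    obtain ⟨r, -⟩ := (hsafe _ hmem).2.2.2.1 y ⟨.top, h1⟩ q
    exact hemp.false r

lemma demote_qall (hsafe : SafeInv Gd) (hmem : (⟨H, U₁, U₂, γ, γ'⟩ : Config) ∈ Gd)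
    (hsub : G ⊆ H) (hH : CtxP H) (hG : CtxP G) (hemp : IsEmpty U₂.carrier) :
    LCond (reduct .qall x G) U₁ U₂ := by
  have hG' := hG.reduct .qall x
  refine ⟨fun y φ hφ q => hemp.false q, fun y φ hφ q => hemp.false q,
    fun y φ hφ q => ?_, fun y φ hφ q => ?_⟩
  · have h1 : FOForm.ex y .top ∈ H :=
      hH.alld .hole _ x (hsub (norm_ex hG' hφ)) (by simp [fv_exT])
    obtain ⟨r, -⟩ := (hsafe _ hmem).2.1 y ⟨.top, h1⟩ q
    exact hemp.false r
  · have h1 : FOForm.not (.all y .top) ∈ H :=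
      hH.alld .hole _ x (hsub (norm_nall hG' hφ)) (by simp [fv_nallT])
    obtain ⟨r, -⟩ := (hsafe _ hmem).2.2.2.2 y ⟨.top, h1⟩ q
    exact hemp.false r

lemma demote_qnex (hsafe : SafeInv Gd) (hmem : (⟨H, U₁, U₂, γ, γ'⟩ : Config) ∈ Gd)
    (hsub : G ⊆ H) (hH : CtxP H) (hG : CtxP G) (hemp : IsEmpty U₂.carrier) :
    LCond (reduct .qnex x G) U₂ U₁ := by
  have hG' := hG.reduct .qnex x
  refine ⟨fun y φ hφ q => ?_, fun y φ hφ q => ?_,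
    fun y φ hφ q => hemp.false q, fun y φ hφ q => hemp.false q⟩
  · have h1 : FOForm.not (.all y .top) ∈ H :=
      hH.exd (.notC .hole) _ x (hsub (norm_all hG' hφ)) (by simp [fv_allT])
    obtain ⟨r, -⟩ := (hsafe _ hmem).2.2.2.2 y ⟨.top, h1⟩ q
    exact hemp.false r
  · have h0 : FOForm.not (.ex x (.not (.ex y .top))) ∈ H := hsub (norm_nex hG' hφ)
    have h1 : FOForm.ex y .top ∈ H :=
      unnot hH (hH.exd (.notC .hole) (.not (.ex y .top)) x h0 (by simp [fv_nexT]))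
    obtain ⟨r, -⟩ := (hsafe _ hmem).2.1 y ⟨.top, h1⟩ q
    exact hemp.false r

lemma demote_qnall (hsafe : SafeInv Gd) (hmem : (⟨H, U₁, U₂, γ, γ'⟩ : Config) ∈ Gd)
    (hsub : G ⊆ H) (hH : CtxP H) (hG : CtxP G) (hemp : IsEmpty U₁.carrier) :
    LCond (reduct .qnall x G) U₂ U₁ := by
  have hG' := hG.reduct .qnall x
  refine ⟨fun y φ hφ q => hemp.false q, fun y φ hφ q => hemp.false q,
    fun y φ hφ q => ?_, fun y φ hφ q => ?_⟩
  · have h1 : FOForm.not (.ex y .top) ∈ H :=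
      hH.alld (.notC .hole) _ x (hsub (norm_ex hG' hφ)) (by simp [fv_exT])
    obtain ⟨r, -⟩ := (hsafe _ hmem).2.2.2.1 y ⟨.top, h1⟩ q
    exact hemp.false r
  · have h0 : FOForm.not (.all x (.not (.all y .top))) ∈ H := hsub (norm_nall hG' hφ)
    have h1 : FOForm.all y .top ∈ H :=
      unnot hH (hH.alld (.notC .hole) (.not (.all y .top)) x h0 (by simp [fv_nallT]))
    obtain ⟨r, -⟩ := (hsafe _ hmem).2.2.1 y ⟨.top, h1⟩ q
    exact hemp.false r

end Cond
section Main
variable {k : ℕ} (GoodF : Fin k → Set Config)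

/-- Component `j` is fully tracked: a component configuration in the `j`-th safe
invariant whose fragment contains the current fragment and whose valuations agree with
the combined ones on the variables owned by `j`. -/
def Tracked (G : Set FOForm) (w w' : Fin k → GWord)
    (A : ℕ → Option (GWord.concatFam w).carrier)
    (B : ℕ → Option (GWord.concatFam w').carrier) (j : Fin k) : Prop :=
  ∃ (H : Set FOForm) (γ : ℕ → Option (w j).carrier) (γ' : ℕ → Option (w' j).carrier),
    (⟨H, w j, w' j, γ, γ'⟩ : Config) ∈ GoodF j ∧ G ⊆ H ∧ CtxP H ∧
    ∀ (x : ℕ) (p : (w j).carrier) (p' : (w' j).carrier),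
      A x = some (inj w j p) → B x = some (inj w' j p') → γ x = some p ∧ γ' x = some p'

/-- Component `j` lags behind: one of its sides is empty, no quantifier move of the
combined game is possible anymore, and a (possibly swapped) component configuration in
the `j`-th safe invariant certifies the `empty`/`¬empty` literals of the fragment. -/
def Lagged (G : Set FOForm) (w w' : Fin k → GWord) (j : Fin k) : Prop :=
  (IsEmpty (w j).carrier ∨ IsEmpty (w' j).carrier) ∧ LCond G (w j) (w' j) ∧
  ((∃ H γ γ', (⟨H, w j, w' j, γ, γ'⟩ : Config) ∈ GoodF j ∧ EmptImp G H) ∨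
   (∃ H γ γ', (⟨H, w' j, w j, γ, γ'⟩ : Config) ∈ GoodF j ∧ EmptImpRev G H))

/-- The two combined valuations are defined on the same variables and assign them
positions in the same component. -/
def OwnerInv (w w' : Fin k → GWord) (A : ℕ → Option (GWord.concatFam w).carrier)
    (B : ℕ → Option (GWord.concatFam w').carrier) : Prop :=
  ∀ x : ℕ, (A x = none ∧ B x = none) ∨
    ∃ (j : Fin k) (p : (w j).carrier) (p' : (w' j).carrier),
      A x = some (inj w j p) ∧ B x = some (inj w' j p')

/-- The safe invariant for the combined game. -/
def GoodSet : Set Config :=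
  { C | ∃ (G : Set FOForm) (w w' : Fin k → GWord)
        (A : ℕ → Option (GWord.concatFam w).carrier)
        (B : ℕ → Option (GWord.concatFam w').carrier),
      C = ⟨G, GWord.concatFam w, GWord.concatFam w', A, B⟩ ∧
      CtxP G ∧ SucStable G ∧ OwnerInv w w' A B ∧
      (∀ j, Tracked GoodF G w w' A B j ∨ Lagged GoodF G w w' j) }

variable {GoodF}

lemma tracked_of {G : Set FOForm} {w w' : Fin k → GWord}
    {A : ℕ → Option (GWord.concatFam w).carrier}
    {B : ℕ → Option (GWord.concatFam w').carrier} {j : Fin k} (hj : Tracked GoodF G w w' A B j ∨ Lagged GoodF G w w' j)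
    (p : (w j).carrier) (p' : (w' j).carrier) : Tracked GoodF G w w' A B j := by
  refine hj.resolve_right fun hl => ?_
  rcases hl.1 with h | h
  · exact h.false p
  · exact h.false p'

lemma empt_contra (hsafe : ∀ i, SafeInv (GoodF i)) {G : Set FOForm} {w w' : Fin k → GWord}
    {A : ℕ → Option (GWord.concatFam w).carrier}
    {B : ℕ → Option (GWord.concatFam w').carrier} {j : Fin k}
    (hj : Tracked GoodF G w w' A B j ∨ Lagged GoodF G w w' j)
    (he : FOForm.empt ∈ G) (h1 : IsEmpty (w j).carrier) (p' : (w' j).carrier) : False := by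
  have fvE : ∀ y ∈ (FOForm.empt).FV, True := fun y hy => trivial
  rcases hj with ⟨H, γ, γ', hmem, hsub, -, -⟩ | ⟨-, -, hlag⟩
  · refine (hsafe j _ hmem).1 ⟨.empt, hsub he, Or.inl trivial, ?_, ?_, ?_⟩
    · intro y hy; simp [FOForm.FV] at hy
    · exact h1
    · intro hs; exact (hs : IsEmpty (w' j).carrier).false p'
  · rcases hlag with ⟨H, γ, γ', hmem, hE⟩ | ⟨H, γ, γ', hmem, hE⟩
    · refine (hsafe j _ hmem).1 ⟨.empt, hE.1 he, Or.inl trivial, ?_, ?_, ?_⟩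
      · intro y hy; simp [FOForm.FV] at hy
      · exact h1
      · intro hs; exact (hs : IsEmpty (w' j).carrier).false p'
    · refine (hsafe j _ hmem).1 ⟨.not .empt, hE.1 he, Or.inr ⟨.empt, trivial, rfl⟩, ?_, ?_, ?_⟩
      · intro y hy; simp [FOForm.FV] at hy
      · intro hs; exact (hs : IsEmpty (w' j).carrier).false p'
      · intro hs; exact hs h1

lemma nempt_contra (hsafe : ∀ i, SafeInv (GoodF i)) {G : Set FOForm} {w w' : Fin k → GWord}
    {A : ℕ → Option (GWord.concatFam w).carrier}
    {B : ℕ → Option (GWord.concatFam w').carrier} {j : Fin k}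
    (hj : Tracked GoodF G w w' A B j ∨ Lagged GoodF G w w' j)
    (he : FOForm.not .empt ∈ G) (p : (w j).carrier) (h2 : IsEmpty (w' j).carrier) : False := by
  rcases hj with ⟨H, γ, γ', hmem, hsub, -, -⟩ | ⟨-, -, hlag⟩
  · refine (hsafe j _ hmem).1 ⟨.not .empt, hsub he, Or.inr ⟨.empt, trivial, rfl⟩, ?_, ?_, ?_⟩
    · intro y hy; simp [FOForm.FV] at hy
    · intro hs; exact (hs : IsEmpty (w j).carrier).false p
    · intro hs; exact hs h2
  · rcases hlag with ⟨H, γ, γ', hmem, hE⟩ | ⟨H, γ, γ', hmem, hE⟩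
    · refine (hsafe j _ hmem).1 ⟨.not .empt, hE.2 he, Or.inr ⟨.empt, trivial, rfl⟩, ?_, ?_, ?_⟩
      · intro y hy; simp [FOForm.FV] at hy
      · intro hs; exact (hs : IsEmpty (w j).carrier).false p
      · intro hs; exact hs h2
    · refine (hsafe j _ hmem).1 ⟨.empt, hE.2 he, Or.inl trivial, ?_, ?_, ?_⟩
      · intro y hy; simp [FOForm.FV] at hy
      · exact h2
      · intro hs; exact (hs : IsEmpty (w j).carrier).false p

end Main
section NoWin
variable {k : ℕ} {GoodF : Fin k → Set Config}

lemma good_no_win (hsafe : ∀ i, SafeInv (GoodF i)) {G : Set FOForm} {w w' : Fin k → GWord}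
    {A : ℕ → Option (GWord.concatFam w).carrier}
    {B : ℕ → Option (GWord.concatFam w').carrier}
    (hG : CtxP G) (hs : SucStable G) (hown : OwnerInv w w' A B)
    (hcomp : ∀ j, Tracked GoodF G w w' A B j ∨ Lagged GoodF G w w' j) :
    ¬ SpoilerWinsNow ⟨G, GWord.concatFam w, GWord.concatFam w', A, B⟩ := by
  rintro ⟨φ, hφG, hlit, hFV, h4, h5⟩
  simp only at hFV h4 h5
  have hOwn : ∀ x : ℕ, (A x).isSome →
      ∃ j p p', A x = some (inj w j p) ∧ B x = some (inj w' j p') := by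
    intro x hx
    rcases hown x with ⟨hA, -⟩ | h
    · rw [hA] at hx; exact absurd hx (by simp)
    · exact h
  have hWin : ∀ (j : Fin k) (H : Set FOForm) (γ : ℕ → Option (w j).carrier)
      (γ' : ℕ → Option (w' j).carrier), (⟨H, w j, w' j, γ, γ'⟩ : Config) ∈ GoodF j →
      ∀ ψ ∈ H, ψ.IsLiteral → (∀ y ∈ ψ.FV, (γ y).isSome) →
      (w j).Sat γ ψ → ¬ (w' j).Sat γ' ψ → False := by
    intro j H γ γ' hm ψ m1 m2 m3 m4 m5
    exact (hsafe j _ hm).1 ⟨ψ, m1, m2, m3, m4, m5⟩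
  rcases hlit with hat | ⟨ψ, hat, rfl⟩
  -- ================== positive atoms ==================
  · cases φ with
    | top => exact h5 trivial
    | bot => exact h4
    | empt =>
      have h5' : ¬ IsEmpty (GWord.concatFam w').carrier := h5
      obtain ⟨r⟩ := not_isEmpty_iff.mp h5'
      obtain ⟨m, s, rfl⟩ := inj_repr r
      exact empt_contra hsafe (hcomp m) hφG (inj_isempty h4 m) s
    | eq x y =>
      obtain ⟨P, Q, hAx, hAy, hPQ⟩ := h4
      obtain ⟨i, p, p', hA, hB⟩ := hOwn x (by rw [hAx]; rfl)
      obtain rfl := Option.some.inj (hA.symm.trans hAx)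
      obtain ⟨i₂, q, q', hA2, hB2⟩ := hOwn y (by rw [hAy]; rfl)
      obtain rfl := Option.some.inj (hA2.symm.trans hAy)
      obtain rfl : i = i₂ := inj_inj_fst hPQ
      obtain rfl : p = q := inj_inj_snd hPQ
      obtain ⟨H, γ, γ', hmem, hsub, -, hmatch⟩ := tracked_of (hcomp i) p p'
      obtain ⟨hγx, hγ'x⟩ := hmatch x p p' hA hB
      obtain ⟨hγy, hγ'y⟩ := hmatch y p q' hA2 hB2
      refine hWin i H γ γ' hmem (.eq x y) (hsub hφG) (Or.inl trivial) ?_ ?_ ?_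
      · intro z hz
        simp [FOForm.FV] at hz
        rcases hz with rfl | rfl
        · rw [hγx]; rfl
        · rw [hγy]; rfl
      · exact ⟨p, p, hγx, hγy, rfl⟩
      · rintro ⟨a, b, hga, hgb, rfl⟩
        have e1 := Option.some.inj (hγ'x.symm.trans hga)
        have e2 := Option.some.inj (hγ'y.symm.trans hgb)
        exact h5 ⟨inj w' i p', inj w' i q', hB, hB2, by rw [e1.trans e2.symm]⟩
    | lab x a =>
      obtain ⟨P, hAx, hlab⟩ := h4
      obtain ⟨i, p, p', hA, hB⟩ := hOwn x (by rw [hAx]; rfl)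
      obtain rfl := Option.some.inj (hA.symm.trans hAx)
      obtain ⟨H, γ, γ', hmem, hsub, -, hmatch⟩ := tracked_of (hcomp i) p p'
      obtain ⟨hγx, hγ'x⟩ := hmatch x p p' hA hB
      refine hWin i H γ γ' hmem (.lab x a) (hsub hφG) (Or.inl trivial) ?_ ?_ ?_
      · intro z hz
        simp [FOForm.FV] at hz
        subst hz; rw [hγx]; rfl
      · exact ⟨p, hγx, hlab⟩
      · rintro ⟨b, hgb, hlb⟩
        have e := Option.some.inj (hγ'x.symm.trans hgb)
        exact h5 ⟨inj w' i p', hB, by rw [inj_label, e]; exact hlb⟩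
    | lt x y =>
      obtain ⟨P, Q, hAx, hAy, hPQ⟩ := h4
      obtain ⟨i, p, p', hA, hB⟩ := hOwn x (by rw [hAx]; rfl)
      obtain rfl := Option.some.inj (hA.symm.trans hAx)
      obtain ⟨i₂, q, q', hA2, hB2⟩ := hOwn y (by rw [hAy]; rfl)
      obtain rfl := Option.some.inj (hA2.symm.trans hAy)
      rcases lt_trichotomy i i₂ with hlt | heq | hgt
      · exact h5 ⟨inj w' i p', inj w' i₂ q', hB, hB2, inj_lt_fst p' q' hlt⟩
      · subst heq
        have hpq : p < q := inj_snd_lt_of_lt hPQ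
        obtain ⟨H, γ, γ', hmem, hsub, -, hmatch⟩ := tracked_of (hcomp i) p p'
        obtain ⟨hγx, hγ'x⟩ := hmatch x p p' hA hB
        obtain ⟨hγy, hγ'y⟩ := hmatch y q q' hA2 hB2
        refine hWin i H γ γ' hmem (.lt x y) (hsub hφG) (Or.inl trivial) ?_ ?_ ?_
        · intro z hz
          simp [FOForm.FV] at hz
          rcases hz with rfl | rfl
          · rw [hγx]; rfl
          · rw [hγy]; rfl
        · exact ⟨p, q, hγx, hγy, hpq⟩
        · rintro ⟨a, b, hga, hgb, hab⟩
          have e1 := Option.some.inj (hγ'x.symm.trans hga)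
          have e2 := Option.some.inj (hγ'y.symm.trans hgb)
          exact h5 ⟨inj w' i p', inj w' i q', hB, hB2,
            inj_lt_snd (by rw [e1, e2]; exact hab)⟩
      · exact absurd (inj_fst_le_of_lt hPQ) (not_le.mpr hgt)
    | le x y =>
      obtain ⟨P, Q, hAx, hAy, hPQ⟩ := h4
      obtain ⟨i, p, p', hA, hB⟩ := hOwn x (by rw [hAx]; rfl)
      obtain rfl := Option.some.inj (hA.symm.trans hAx)
      obtain ⟨i₂, q, q', hA2, hB2⟩ := hOwn y (by rw [hAy]; rfl)
      obtain rfl := Option.some.inj (hA2.symm.trans hAy)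
      rcases lt_trichotomy i i₂ with hlt | heq | hgt
      · exact h5 ⟨inj w' i p', inj w' i₂ q', hB, hB2, (inj_lt_fst p' q' hlt).le⟩
      · subst heq
        have hpq : p ≤ q := inj_snd_le_of_le hPQ
        obtain ⟨H, γ, γ', hmem, hsub, -, hmatch⟩ := tracked_of (hcomp i) p p'
        obtain ⟨hγx, hγ'x⟩ := hmatch x p p' hA hB
        obtain ⟨hγy, hγ'y⟩ := hmatch y q q' hA2 hB2
        refine hWin i H γ γ' hmem (.le x y) (hsub hφG) (Or.inl trivial) ?_ ?_ ?_
        · intro z hz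
          simp [FOForm.FV] at hz
          rcases hz with rfl | rfl
          · rw [hγx]; rfl
          · rw [hγy]; rfl
        · exact ⟨p, q, hγx, hγy, hpq⟩
        · rintro ⟨a, b, hga, hgb, hab⟩
          have e1 := Option.some.inj (hγ'x.symm.trans hga)
          have e2 := Option.some.inj (hγ'y.symm.trans hgb)
          exact h5 ⟨inj w' i p', inj w' i q', hB, hB2,
            inj_le_snd (by rw [e1, e2]; exact hab)⟩
      · exact absurd (inj_fst_le_of_le hPQ) (not_le.mpr hgt)
    | suc x y =>
      obtain ⟨P, Q, hAx, hAy, hPQ, hnb⟩ := h4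
      obtain ⟨i, p, p', hA, hB⟩ := hOwn x (by rw [hAx]; rfl)
      obtain rfl := Option.some.inj (hA.symm.trans hAx)
      obtain ⟨i₂, q, q', hA2, hB2⟩ := hOwn y (by rw [hAy]; rfl)
      obtain rfl := Option.some.inj (hA2.symm.trans hAy)
      rcases lt_trichotomy i i₂ with hlt | heq | hgt
      · -- suc across a border
        have hpmax : ∀ p₂ : (w i).carrier, p₂ ≤ p := by
          intro p₂; by_contra hc
          exact hnb (inj w i p₂) ⟨inj_lt_snd (not_le.mp hc), inj_lt_fst _ _ hlt⟩
        have hqmin : ∀ q₂ : (w i₂).carrier, q ≤ q₂ := by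
          intro q₂; by_contra hc
          exact hnb (inj w i₂ q₂) ⟨inj_lt_fst _ _ hlt, inj_lt_snd (not_le.mp hc)⟩
        have hbet : ∀ m : Fin k, i < m → m < i₂ → IsEmpty (w m).carrier := by
          intro m hm1 hm2
          constructor; intro s
          exact hnb (inj w m s) ⟨inj_lt_fst _ _ hm1, inj_lt_fst _ _ hm2⟩
        obtain ⟨-, hfmax, hfmin⟩ := hs.1 .hole x y hφG
        have hempt : FOForm.empt ∈ G := hs.2 .hole x (Or.inr hfmax)
        -- in the second word the pair is not adjacent
        have h5' : ∃ r, inj w' i p' < r ∧ r < inj w' i₂ q' := by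
          by_contra hc
          push_neg at hc
          exact h5 ⟨inj w' i p', inj w' i₂ q', hB, hB2, inj_lt_fst p' q' hlt,
            fun r hr => absurd hr.2 (not_lt.mpr (hc r hr.1))⟩
        obtain ⟨r, hr1, hr2⟩ := h5'
        obtain ⟨m, s, rfl⟩ := inj_repr r
        have hm1 : i ≤ m := inj_fst_le_of_lt hr1
        have hm2 : m ≤ i₂ := inj_fst_le_of_lt hr2
        rcases eq_or_lt_of_le hm1 with rfl | hm1'
        · -- p' is not maximal in w' i
          have hps : p' < s := inj_snd_lt_of_lt hr1
          obtain ⟨H, γ, γ', hmem, hsub, -, hmatch⟩ := tracked_of (hcomp i) p p'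
          obtain ⟨hγx, hγ'x⟩ := hmatch x p p' hA hB
          refine hWin i H γ γ' hmem (.fmax x) (hsub hfmax) (Or.inl trivial) ?_ ?_ ?_
          · intro z hz; simp [FOForm.FV] at hz; subst hz; rw [hγx]; rfl
          · exact ⟨p, hγx, hpmax⟩
          · rintro ⟨b, hgb, hbmax⟩
            have e := Option.some.inj (hγ'x.symm.trans hgb)
            exact absurd (hbmax s) (not_le.mpr (e ▸ hps))
        rcases eq_or_lt_of_le hm2 with rfl | hm2'
        · -- q' is not minimal in w' i₂
          have hsq : s < q' := inj_snd_lt_of_lt hr2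
          obtain ⟨H, γ, γ', hmem, hsub, -, hmatch⟩ := tracked_of (hcomp m) q q'
          obtain ⟨hγy, hγ'y⟩ := hmatch y q q' hA2 hB2
          refine hWin m H γ γ' hmem (.fmin y) (hsub hfmin) (Or.inl trivial) ?_ ?_ ?_
          · intro z hz; simp [FOForm.FV] at hz; subst hz; rw [hγy]; rfl
          · exact ⟨q, hγy, hqmin⟩
          · rintro ⟨b, hgb, hbmin⟩
            have e := Option.some.inj (hγ'y.symm.trans hgb)
            exact absurd (hbmin s) (not_le.mpr (e ▸ hsq))
        · exact empt_contra hsafe (hcomp m) hempt (hbet m hm1' hm2') s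
      · subst heq
        have hpq : p < q := inj_snd_lt_of_lt hPQ
        have hnbi : ∀ r : (w i).carrier, ¬ (p < r ∧ r < q) := by
          intro r hr
          exact hnb (inj w i r) ⟨inj_lt_snd hr.1, inj_lt_snd hr.2⟩
        obtain ⟨H, γ, γ', hmem, hsub, -, hmatch⟩ := tracked_of (hcomp i) p p'
        obtain ⟨hγx, hγ'x⟩ := hmatch x p p' hA hB
        obtain ⟨hγy, hγ'y⟩ := hmatch y q q' hA2 hB2
        refine hWin i H γ γ' hmem (.suc x y) (hsub hφG) (Or.inl trivial) ?_ ?_ ?_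
        · intro z hz
          simp [FOForm.FV] at hz
          rcases hz with rfl | rfl
          · rw [hγx]; rfl
          · rw [hγy]; rfl
        · exact ⟨p, q, hγx, hγy, hpq, hnbi⟩
        · rintro ⟨a, b, hga, hgb, hab, hnab⟩
          have e1 := Option.some.inj (hγ'x.symm.trans hga)
          have e2 := Option.some.inj (hγ'y.symm.trans hgb)
          refine h5 ⟨inj w' i p', inj w' i q', hB, hB2,
            inj_lt_snd (by rw [e1, e2]; exact hab), ?_⟩
          rintro r ⟨hr1, hr2⟩
          obtain ⟨m, s, rfl⟩ := inj_repr r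
          obtain rfl : m = i := le_antisymm (inj_fst_le_of_lt hr2) (inj_fst_le_of_lt hr1)
          refine hnab s ⟨?_, ?_⟩
          · rw [← e1]; exact inj_snd_lt_of_lt hr1
          · rw [← e2]; exact inj_snd_lt_of_lt hr2
      · exact absurd (inj_fst_le_of_lt hPQ) (not_le.mpr hgt)
    | fmin x =>
      obtain ⟨P, hAx, hmin⟩ := h4
      obtain ⟨i, p, p', hA, hB⟩ := hOwn x (by rw [hAx]; rfl)
      obtain rfl := Option.some.inj (hA.symm.trans hAx)
      have h5' : ∃ r : (GWord.concatFam w').carrier, ¬ inj w' i p' ≤ r := by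
        by_contra hc; push_neg at hc
        exact h5 ⟨inj w' i p', hB, hc⟩
      obtain ⟨r, hr⟩ := h5'
      obtain ⟨m, s, rfl⟩ := inj_repr r
      have hmi : m ≤ i := inj_fst_le_of_lt (not_le.mp hr)
      rcases eq_or_lt_of_le hmi with rfl | hmi'
      · have hsp : s < p' := inj_snd_lt_of_lt (not_le.mp hr)
        obtain ⟨H, γ, γ', hmem, hsub, -, hmatch⟩ := tracked_of (hcomp m) p p'
        obtain ⟨hγx, hγ'x⟩ := hmatch x p p' hA hB
        refine hWin m H γ γ' hmem (.fmin x) (hsub hφG) (Or.inl trivial) ?_ ?_ ?_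
        · intro z hz; simp [FOForm.FV] at hz; subst hz; rw [hγx]; rfl
        · exact ⟨p, hγx, fun q₂ => inj_snd_le_of_le (hmin (inj w m q₂))⟩
        · rintro ⟨b, hgb, hbmin⟩
          have e := Option.some.inj (hγ'x.symm.trans hgb)
          exact absurd (hbmin s) (not_le.mpr (e ▸ hsp))
      · have hemp : IsEmpty (w m).carrier := by
          constructor; intro t
          exact absurd (inj_fst_le_of_le (hmin (inj w m t))) (not_le.mpr hmi')
        have hempt : FOForm.empt ∈ G := hs.2 .hole x (Or.inl hφG)
        exact empt_contra hsafe (hcomp m) hempt hemp s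
    | fmax x =>
      obtain ⟨P, hAx, hmax⟩ := h4
      obtain ⟨i, p, p', hA, hB⟩ := hOwn x (by rw [hAx]; rfl)
      obtain rfl := Option.some.inj (hA.symm.trans hAx)
      have h5' : ∃ r : (GWord.concatFam w').carrier, ¬ r ≤ inj w' i p' := by
        by_contra hc; push_neg at hc
        exact h5 ⟨inj w' i p', hB, hc⟩
      obtain ⟨r, hr⟩ := h5'
      obtain ⟨m, s, rfl⟩ := inj_repr r
      have hmi : i ≤ m := inj_fst_le_of_lt (not_le.mp hr)
      rcases eq_or_lt_of_le hmi with rfl | hmi'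
      · have hsp : p' < s := inj_snd_lt_of_lt (not_le.mp hr)
        obtain ⟨H, γ, γ', hmem, hsub, -, hmatch⟩ := tracked_of (hcomp i) p p'
        obtain ⟨hγx, hγ'x⟩ := hmatch x p p' hA hB
        refine hWin i H γ γ' hmem (.fmax x) (hsub hφG) (Or.inl trivial) ?_ ?_ ?_
        · intro z hz; simp [FOForm.FV] at hz; subst hz; rw [hγx]; rfl
        · exact ⟨p, hγx, fun q₂ => inj_snd_le_of_le (hmax (inj w i q₂))⟩
        · rintro ⟨b, hgb, hbmax⟩
          have e := Option.some.inj (hγ'x.symm.trans hgb)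
          exact absurd (hbmax s) (not_le.mpr (e ▸ hsp))
      · have hemp : IsEmpty (w m).carrier := by
          constructor; intro t
          exact absurd (inj_fst_le_of_le (hmax (inj w m t))) (not_le.mpr hmi')
        have hempt : FOForm.empt ∈ G := hs.2 .hole x (Or.inr hφG)
        exact empt_contra hsafe (hcomp m) hempt hemp s
    | not ψ => exact (hat : False).elim
    | or ψ χ => exact (hat : False).elim
    | and ψ χ => exact (hat : False).elim
    | ex z ψ => exact (hat : False).elim
    | all z ψ => exact (hat : False).elim
  -- ================== negated atoms ==================
  · have hS2 : (GWord.concatFam w').Sat B ψ := by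
      by_contra hc; exact h5 hc
    have hS1 : ¬ (GWord.concatFam w).Sat A ψ := h4
    cases ψ with
    | top => exact hS1 trivial
    | bot => exact hS2
    | empt =>
      have h1' : ¬ IsEmpty (GWord.concatFam w).carrier := hS1
      obtain ⟨r⟩ := not_isEmpty_iff.mp h1'
      obtain ⟨m, s, rfl⟩ := inj_repr r
      exact nempt_contra hsafe (hcomp m) hφG s (inj_isempty hS2 m)
    | eq x y =>
      have hx : (A x).isSome := hFV x (by simp [FOForm.FV])
      have hy : (A y).isSome := hFV y (by simp [FOForm.FV])
      obtain ⟨i, p, p', hA, hB⟩ := hOwn x hx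
      obtain ⟨i₂, q, q', hA2, hB2⟩ := hOwn y hy
      obtain ⟨P', Q', hBx, hBy, hPQ'⟩ := hS2
      obtain rfl := Option.some.inj (hB.symm.trans hBx)
      obtain rfl := Option.some.inj (hB2.symm.trans hBy)
      obtain rfl : i = i₂ := inj_inj_fst hPQ'
      obtain rfl : p' = q' := inj_inj_snd hPQ'
      obtain ⟨H, γ, γ', hmem, hsub, -, hmatch⟩ := tracked_of (hcomp i) p p'
      obtain ⟨hγx, hγ'x⟩ := hmatch x p p' hA hB
      obtain ⟨hγy, hγ'y⟩ := hmatch y q p' hA2 hB2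
      refine hWin i H γ γ' hmem (.not (.eq x y)) (hsub hφG)
        (Or.inr ⟨.eq x y, trivial, rfl⟩) ?_ ?_ ?_
      · intro z hz
        simp [FOForm.FV] at hz
        rcases hz with rfl | rfl
        · rw [hγx]; rfl
        · rw [hγy]; rfl
      · rintro ⟨a, b, hga, hgb, rfl⟩
        have e1 := Option.some.inj (hγx.symm.trans hga)
        have e2 := Option.some.inj (hγy.symm.trans hgb)
        exact hS1 ⟨inj w i p, inj w i q, hA, hA2, by rw [e1.trans e2.symm]⟩
      · intro hcon
        exact hcon ⟨p', p', hγ'x, hγ'y, rfl⟩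
    | lab x a =>
      have hx : (A x).isSome := hFV x (by simp [FOForm.FV])
      obtain ⟨i, p, p', hA, hB⟩ := hOwn x hx
      obtain ⟨P', hBx, hlab⟩ := hS2
      obtain rfl := Option.some.inj (hB.symm.trans hBx)
      obtain ⟨H, γ, γ', hmem, hsub, -, hmatch⟩ := tracked_of (hcomp i) p p'
      obtain ⟨hγx, hγ'x⟩ := hmatch x p p' hA hB
      refine hWin i H γ γ' hmem (.not (.lab x a)) (hsub hφG)
        (Or.inr ⟨.lab x a, trivial, rfl⟩) ?_ ?_ ?_
      · intro z hz; simp [FOForm.FV] at hz; subst hz; rw [hγx]; rfl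
      · rintro ⟨b, hgb, hlb⟩
        have e := Option.some.inj (hγx.symm.trans hgb)
        exact hS1 ⟨inj w i p, hA, by rw [inj_label, e]; exact hlb⟩
      · intro hcon
        exact hcon ⟨p', hγ'x, hlab⟩
    | lt x y =>
      have hx : (A x).isSome := hFV x (by simp [FOForm.FV])
      have hy : (A y).isSome := hFV y (by simp [FOForm.FV])
      obtain ⟨i, p, p', hA, hB⟩ := hOwn x hx
      obtain ⟨i₂, q, q', hA2, hB2⟩ := hOwn y hy
      obtain ⟨P', Q', hBx, hBy, hPQ'⟩ := hS2
      obtain rfl := Option.some.inj (hB.symm.trans hBx)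
      obtain rfl := Option.some.inj (hB2.symm.trans hBy)
      rcases lt_trichotomy i i₂ with hlt | heq | hgt
      · exact hS1 ⟨inj w i p, inj w i₂ q, hA, hA2, inj_lt_fst p q hlt⟩
      · subst heq
        have hpq' : p' < q' := inj_snd_lt_of_lt hPQ'
        obtain ⟨H, γ, γ', hmem, hsub, -, hmatch⟩ := tracked_of (hcomp i) p p'
        obtain ⟨hγx, hγ'x⟩ := hmatch x p p' hA hB
        obtain ⟨hγy, hγ'y⟩ := hmatch y q q' hA2 hB2
        refine hWin i H γ γ' hmem (.not (.lt x y)) (hsub hφG)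
          (Or.inr ⟨.lt x y, trivial, rfl⟩) ?_ ?_ ?_
        · intro z hz
          simp [FOForm.FV] at hz
          rcases hz with rfl | rfl
          · rw [hγx]; rfl
          · rw [hγy]; rfl
        · rintro ⟨a, b, hga, hgb, hab⟩
          have e1 := Option.some.inj (hγx.symm.trans hga)
          have e2 := Option.some.inj (hγy.symm.trans hgb)
          exact hS1 ⟨inj w i p, inj w i q, hA, hA2,
            inj_lt_snd (by rw [e1, e2]; exact hab)⟩
        · intro hcon
          exact hcon ⟨p', q', hγ'x, hγ'y, hpq'⟩
      · exact absurd (inj_fst_le_of_lt hPQ') (not_le.mpr hgt)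
    | le x y =>
      have hx : (A x).isSome := hFV x (by simp [FOForm.FV])
      have hy : (A y).isSome := hFV y (by simp [FOForm.FV])
      obtain ⟨i, p, p', hA, hB⟩ := hOwn x hx
      obtain ⟨i₂, q, q', hA2, hB2⟩ := hOwn y hy
      obtain ⟨P', Q', hBx, hBy, hPQ'⟩ := hS2
      obtain rfl := Option.some.inj (hB.symm.trans hBx)
      obtain rfl := Option.some.inj (hB2.symm.trans hBy)
      rcases lt_trichotomy i i₂ with hlt | heq | hgt
      · exact hS1 ⟨inj w i p, inj w i₂ q, hA, hA2, (inj_lt_fst p q hlt).le⟩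
      · subst heq
        have hpq' : p' ≤ q' := inj_snd_le_of_le hPQ'
        obtain ⟨H, γ, γ', hmem, hsub, -, hmatch⟩ := tracked_of (hcomp i) p p'
        obtain ⟨hγx, hγ'x⟩ := hmatch x p p' hA hB
        obtain ⟨hγy, hγ'y⟩ := hmatch y q q' hA2 hB2
        refine hWin i H γ γ' hmem (.not (.le x y)) (hsub hφG)
          (Or.inr ⟨.le x y, trivial, rfl⟩) ?_ ?_ ?_
        · intro z hz
          simp [FOForm.FV] at hz
          rcases hz with rfl | rfl
          · rw [hγx]; rfl
          · rw [hγy]; rfl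
        · rintro ⟨a, b, hga, hgb, hab⟩
          have e1 := Option.some.inj (hγx.symm.trans hga)
          have e2 := Option.some.inj (hγy.symm.trans hgb)
          exact hS1 ⟨inj w i p, inj w i q, hA, hA2,
            inj_le_snd (by rw [e1, e2]; exact hab)⟩
        · intro hcon
          exact hcon ⟨p', q', hγ'x, hγ'y, hpq'⟩
      · exact absurd (inj_fst_le_of_le hPQ') (not_le.mpr hgt)
    | suc x y =>
      have hx : (A x).isSome := hFV x (by simp [FOForm.FV])
      have hy : (A y).isSome := hFV y (by simp [FOForm.FV])
      obtain ⟨i, p, p', hA, hB⟩ := hOwn x hx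
      obtain ⟨i₂, q, q', hA2, hB2⟩ := hOwn y hy
      obtain ⟨P', Q', hBx, hBy, hPQ', hnb'⟩ := hS2
      obtain rfl := Option.some.inj (hB.symm.trans hBx)
      obtain rfl := Option.some.inj (hB2.symm.trans hBy)
      rcases lt_trichotomy i i₂ with hlt | heq | hgt
      · -- adjacent across a border in w'
        have hpmax' : ∀ p₂ : (w' i).carrier, p₂ ≤ p' := by
          intro p₂; by_contra hc
          exact hnb' (inj w' i p₂) ⟨inj_lt_snd (not_le.mp hc), inj_lt_fst _ _ hlt⟩
        have hqmin' : ∀ q₂ : (w' i₂).carrier, q' ≤ q₂ := by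
          intro q₂; by_contra hc
          exact hnb' (inj w' i₂ q₂) ⟨inj_lt_fst _ _ hlt, inj_lt_snd (not_le.mp hc)⟩
        have hbet' : ∀ m : Fin k, i < m → m < i₂ → IsEmpty (w' m).carrier := by
          intro m hm1 hm2
          constructor; intro s
          exact hnb' (inj w' m s) ⟨inj_lt_fst _ _ hm1, inj_lt_fst _ _ hm2⟩
        obtain ⟨-, hnfmax, hnfmin⟩ := hs.1 (.notC .hole) x y hφG
        have hnempt : FOForm.not .empt ∈ G := hs.2 (.notC .hole) x (Or.inr hnfmax)
        have h1' : ∃ r, inj w i p < r ∧ r < inj w i₂ q := by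
          by_contra hc
          push_neg at hc
          exact hS1 ⟨inj w i p, inj w i₂ q, hA, hA2, inj_lt_fst p q hlt,
            fun r hr => absurd hr.2 (not_lt.mpr (hc r hr.1))⟩
        obtain ⟨r, hr1, hr2⟩ := h1'
        obtain ⟨m, s, rfl⟩ := inj_repr r
        have hm1 : i ≤ m := inj_fst_le_of_lt hr1
        have hm2 : m ≤ i₂ := inj_fst_le_of_lt hr2
        rcases eq_or_lt_of_le hm1 with rfl | hm1'
        · have hps : p < s := inj_snd_lt_of_lt hr1
          obtain ⟨H, γ, γ', hmem, hsub, -, hmatch⟩ := tracked_of (hcomp i) p p'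
          obtain ⟨hγx, hγ'x⟩ := hmatch x p p' hA hB
          refine hWin i H γ γ' hmem (.not (.fmax x)) (hsub hnfmax)
            (Or.inr ⟨.fmax x, trivial, rfl⟩) ?_ ?_ ?_
          · intro z hz; simp [FOForm.FV] at hz; subst hz; rw [hγx]; rfl
          · rintro ⟨b, hgb, hbmax⟩
            have e := Option.some.inj (hγx.symm.trans hgb)
            exact absurd (hbmax s) (not_le.mpr (e ▸ hps))
          · intro hcon
            exact hcon ⟨p', hγ'x, hpmax'⟩
        rcases eq_or_lt_of_le hm2 with rfl | hm2'
        · have hsq : s < q := inj_snd_lt_of_lt hr2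
          obtain ⟨H, γ, γ', hmem, hsub, -, hmatch⟩ := tracked_of (hcomp m) q q'
          obtain ⟨hγy, hγ'y⟩ := hmatch y q q' hA2 hB2
          refine hWin m H γ γ' hmem (.not (.fmin y)) (hsub hnfmin)
            (Or.inr ⟨.fmin y, trivial, rfl⟩) ?_ ?_ ?_
          · intro z hz; simp [FOForm.FV] at hz; subst hz; rw [hγy]; rfl
          · rintro ⟨b, hgb, hbmin⟩
            have e := Option.some.inj (hγy.symm.trans hgb)
            exact absurd (hbmin s) (not_le.mpr (e ▸ hsq))
          · intro hcon
            exact hcon ⟨q', hγ'y, hqmin'⟩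
        · exact nempt_contra hsafe (hcomp m) hnempt s (hbet' m hm1' hm2')
      · subst heq
        have hpq' : p' < q' := inj_snd_lt_of_lt hPQ'
        have hnbi' : ∀ r : (w' i).carrier, ¬ (p' < r ∧ r < q') := by
          intro r hr
          exact hnb' (inj w' i r) ⟨inj_lt_snd hr.1, inj_lt_snd hr.2⟩
        obtain ⟨H, γ, γ', hmem, hsub, -, hmatch⟩ := tracked_of (hcomp i) p p'
        obtain ⟨hγx, hγ'x⟩ := hmatch x p p' hA hB
        obtain ⟨hγy, hγ'y⟩ := hmatch y q q' hA2 hB2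
        refine hWin i H γ γ' hmem (.not (.suc x y)) (hsub hφG)
          (Or.inr ⟨.suc x y, trivial, rfl⟩) ?_ ?_ ?_
        · intro z hz
          simp [FOForm.FV] at hz
          rcases hz with rfl | rfl
          · rw [hγx]; rfl
          · rw [hγy]; rfl
        · rintro ⟨a, b, hga, hgb, hab, hnab⟩
          have e1 := Option.some.inj (hγx.symm.trans hga)
          have e2 := Option.some.inj (hγy.symm.trans hgb)
          refine hS1 ⟨inj w i p, inj w i q, hA, hA2,
            inj_lt_snd (by rw [e1, e2]; exact hab), ?_⟩
          rintro r ⟨hr1, hr2⟩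
          obtain ⟨m, s, rfl⟩ := inj_repr r
          obtain rfl : m = i := le_antisymm (inj_fst_le_of_lt hr2) (inj_fst_le_of_lt hr1)
          refine hnab s ⟨?_, ?_⟩
          · rw [← e1]; exact inj_snd_lt_of_lt hr1
          · rw [← e2]; exact inj_snd_lt_of_lt hr2
        · intro hcon
          exact hcon ⟨p', q', hγ'x, hγ'y, hpq', hnbi'⟩
      · exact absurd (inj_fst_le_of_lt hPQ') (not_le.mpr hgt)
    | fmin x =>
      have hx : (A x).isSome := hFV x (by simp [FOForm.FV])
      obtain ⟨i, p, p', hA, hB⟩ := hOwn x hx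
      obtain ⟨P', hBx, hmin'⟩ := hS2
      obtain rfl := Option.some.inj (hB.symm.trans hBx)
      have h1' : ∃ r : (GWord.concatFam w).carrier, ¬ inj w i p ≤ r := by
        by_contra hc; push_neg at hc
        exact hS1 ⟨inj w i p, hA, hc⟩
      obtain ⟨r, hr⟩ := h1'
      obtain ⟨m, s, rfl⟩ := inj_repr r
      have hmi : m ≤ i := inj_fst_le_of_lt (not_le.mp hr)
      have hnempt : FOForm.not .empt ∈ G := hs.2 (.notC .hole) x (Or.inl hφG)
      rcases eq_or_lt_of_le hmi with rfl | hmi'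
      · have hsp : s < p := inj_snd_lt_of_lt (not_le.mp hr)
        obtain ⟨H, γ, γ', hmem, hsub, -, hmatch⟩ := tracked_of (hcomp m) p p'
        obtain ⟨hγx, hγ'x⟩ := hmatch x p p' hA hB
        refine hWin m H γ γ' hmem (.not (.fmin x)) (hsub hφG)
          (Or.inr ⟨.fmin x, trivial, rfl⟩) ?_ ?_ ?_
        · intro z hz; simp [FOForm.FV] at hz; subst hz; rw [hγx]; rfl
        · rintro ⟨b, hgb, hbmin⟩
          have e := Option.some.inj (hγx.symm.trans hgb)
          exact absurd (hbmin s) (not_le.mpr (e ▸ hsp))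
        · intro hcon
          exact hcon ⟨p', hγ'x, fun q₂ => inj_snd_le_of_le (hmin' (inj w' m q₂))⟩
      · have hemp' : IsEmpty (w' m).carrier := by
          constructor; intro t
          exact absurd (inj_fst_le_of_le (hmin' (inj w' m t))) (not_le.mpr hmi')
        exact nempt_contra hsafe (hcomp m) hnempt s hemp'
    | fmax x =>
      have hx : (A x).isSome := hFV x (by simp [FOForm.FV])
      obtain ⟨i, p, p', hA, hB⟩ := hOwn x hx
      obtain ⟨P', hBx, hmax'⟩ := hS2
      obtain rfl := Option.some.inj (hB.symm.trans hBx)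
      have h1' : ∃ r : (GWord.concatFam w).carrier, ¬ r ≤ inj w i p := by
        by_contra hc; push_neg at hc
        exact hS1 ⟨inj w i p, hA, hc⟩
      obtain ⟨r, hr⟩ := h1'
      obtain ⟨m, s, rfl⟩ := inj_repr r
      have hmi : i ≤ m := inj_fst_le_of_lt (not_le.mp hr)
      have hnempt : FOForm.not .empt ∈ G := hs.2 (.notC .hole) x (Or.inr hφG)
      rcases eq_or_lt_of_le hmi with rfl | hmi'
      · have hsp : p < s := inj_snd_lt_of_lt (not_le.mp hr)
        obtain ⟨H, γ, γ', hmem, hsub, -, hmatch⟩ := tracked_of (hcomp i) p p'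
        obtain ⟨hγx, hγ'x⟩ := hmatch x p p' hA hB
        refine hWin i H γ γ' hmem (.not (.fmax x)) (hsub hφG)
          (Or.inr ⟨.fmax x, trivial, rfl⟩) ?_ ?_ ?_
        · intro z hz; simp [FOForm.FV] at hz; subst hz; rw [hγx]; rfl
        · rintro ⟨b, hgb, hbmax⟩
          have e := Option.some.inj (hγx.symm.trans hgb)
          exact absurd (hbmax s) (not_le.mpr (e ▸ hsp))
        · intro hcon
          exact hcon ⟨p', hγ'x, fun q₂ => inj_snd_le_of_le (hmax' (inj w' i q₂))⟩
      · have hemp' : IsEmpty (w' m).carrier := by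
          constructor; intro t
          exact absurd (inj_fst_le_of_le (hmax' (inj w' m t))) (not_le.mpr hmi')
        exact nempt_contra hsafe (hcomp m) hnempt s hemp'
    | not χ => exact (hat : False).elim
    | or χ χ' => exact (hat : False).elim
    | and χ χ' => exact (hat : False).elim
    | ex z χ => exact (hat : False).elim
    | all z χ => exact (hat : False).elim

end NoWin
section Safe
variable {k : ℕ} {GoodF : Fin k → Set Config}

lemma good_safe (hsafe : ∀ i, SafeInv (GoodF i)) : SafeInv (GoodSet GoodF) := by
  intro D hD
  obtain ⟨G, w, w', A, B, rfl, hG, hs, hown, hcomp⟩ := hD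
  refine ⟨good_no_win hsafe hG hs hown hcomp, ?_, ?_, ?_, ?_⟩
  -- ===================== qex =====================
  · intro x hne q
    obtain ⟨φ0, hφ0⟩ := hne
    obtain ⟨i, qq, rfl⟩ := inj_repr q
    rcases hcomp i with ⟨H, γ, γ', hmem, hsub, hctx, hmatch⟩ | hlag
    swap
    · exact (hlag.2.1.2.2.1 x φ0 hφ0 qq).elim
    obtain ⟨r, hr⟩ := (hsafe i _ hmem).2.1 x ⟨φ0, reduct_mono hsub hφ0⟩ qq
    refine ⟨inj w' i r, reduct .qex x G, w, w',
      updVal A x (inj w i qq), updVal B x (inj w' i r), rfl,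
      hG.reduct _ _, hs.reduct _ _, ?_, ?_⟩
    · intro z
      by_cases hz : z = x
      · subst hz
        exact Or.inr ⟨i, qq, r, by simp [updVal], by simp [updVal]⟩
      · rcases hown z with ⟨h1, h2⟩ | ⟨j, p, p', h1, h2⟩
        · exact Or.inl ⟨by simp [updVal, hz, h1], by simp [updVal, hz, h2]⟩
        · exact Or.inr ⟨j, p, p', by simp [updVal, hz, h1], by simp [updVal, hz, h2]⟩
    · intro j
      by_cases hji : j = i
      · subst hji
        left
        refine ⟨reduct .qex x H, updVal γ x qq, updVal γ' x r, hr,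
          reduct_mono hsub, hctx.reduct _ _, ?_⟩
        intro z p p' hAz hBz
        by_cases hz : z = x
        · subst hz
          simp only [updVal, if_pos rfl] at hAz hBz
          obtain rfl : qq = p := inj_inj_snd (Option.some.inj hAz)
          obtain rfl : r = p' := inj_inj_snd (Option.some.inj hBz)
          simp [updVal]
        · simp only [updVal, if_neg hz] at hAz hBz ⊢
          exact hmatch z p p' hAz hBz
      · rcases hcomp j with ⟨Hj, γj, γ'j, hmemj, hsubj, hctxj, hmatchj⟩ | hlagj
        · rcases isEmpty_or_nonempty (w j).carrier with hje | hne2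
          · right
            exact ⟨Or.inl hje, demote_qex (hsafe j) hmemj hsubj hctxj hG hje,
              Or.inl ⟨Hj, γj, γ'j, hmemj, EmptImp_qex hG (EmptImp_of_subset hsubj)⟩⟩
          · obtain ⟨pj⟩ := hne2
            obtain ⟨rj, hrj⟩ := (hsafe j _ hmemj).2.1 x ⟨φ0, reduct_mono hsubj hφ0⟩ pj
            left
            refine ⟨reduct .qex x Hj, updVal γj x pj, updVal γ'j x rj, hrj,
              reduct_mono hsubj, hctxj.reduct _ _, ?_⟩
            intro z p p' hAz hBz
            by_cases hz : z = x
            · subst hz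
              simp only [updVal, if_pos rfl] at hAz
              exact absurd (inj_inj_fst (Option.some.inj hAz)).symm hji
            · simp only [updVal, if_neg hz] at hAz hBz ⊢
              exact hmatchj z p p' hAz hBz
        · right
          refine ⟨hlagj.1, LCond_qex hG hlagj.2.1, ?_⟩
          rcases hlagj.2.2 with ⟨Hj, γj, γ'j, hmemj, hE⟩ | ⟨Hj, γj, γ'j, hmemj, hE⟩
          · exact Or.inl ⟨Hj, γj, γ'j, hmemj, EmptImp_qex hG hE⟩
          · exact Or.inr ⟨Hj, γj, γ'j, hmemj, EmptImpRev_qex hG hE⟩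
  -- ===================== qall =====================
  · intro x hne q
    obtain ⟨φ0, hφ0⟩ := hne
    obtain ⟨i, qq, rfl⟩ := inj_repr q
    rcases hcomp i with ⟨H, γ, γ', hmem, hsub, hctx, hmatch⟩ | hlag
    swap
    · exact (hlag.2.1.1 x φ0 hφ0 qq).elim
    obtain ⟨r, hr⟩ := (hsafe i _ hmem).2.2.1 x ⟨φ0, reduct_mono hsub hφ0⟩ qq
    refine ⟨inj w i r, reduct .qall x G, w, w',
      updVal A x (inj w i r), updVal B x (inj w' i qq), rfl,
      hG.reduct _ _, hs.reduct _ _, ?_, ?_⟩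
    · intro z
      by_cases hz : z = x
      · subst hz
        exact Or.inr ⟨i, r, qq, by simp [updVal], by simp [updVal]⟩
      · rcases hown z with ⟨h1, h2⟩ | ⟨j, p, p', h1, h2⟩
        · exact Or.inl ⟨by simp [updVal, hz, h1], by simp [updVal, hz, h2]⟩
        · exact Or.inr ⟨j, p, p', by simp [updVal, hz, h1], by simp [updVal, hz, h2]⟩
    · intro j
      by_cases hji : j = i
      · subst hji
        left
        refine ⟨reduct .qall x H, updVal γ x r, updVal γ' x qq, hr,
          reduct_mono hsub, hctx.reduct _ _, ?_⟩
        intro z p p' hAz hBz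
        by_cases hz : z = x
        · subst hz
          simp only [updVal, if_pos rfl] at hAz hBz
          obtain rfl : r = p := inj_inj_snd (Option.some.inj hAz)
          obtain rfl : qq = p' := inj_inj_snd (Option.some.inj hBz)
          simp [updVal]
        · simp only [updVal, if_neg hz] at hAz hBz ⊢
          exact hmatch z p p' hAz hBz
      · rcases hcomp j with ⟨Hj, γj, γ'j, hmemj, hsubj, hctxj, hmatchj⟩ | hlagj
        · rcases isEmpty_or_nonempty (w' j).carrier with hje | hne2
          · right
            exact ⟨Or.inr hje, demote_qall (hsafe j) hmemj hsubj hctxj hG hje,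
              Or.inl ⟨Hj, γj, γ'j, hmemj, EmptImp_qall hG (EmptImp_of_subset hsubj)⟩⟩
          · obtain ⟨pj⟩ := hne2
            obtain ⟨rj, hrj⟩ := (hsafe j _ hmemj).2.2.1 x ⟨φ0, reduct_mono hsubj hφ0⟩ pj
            left
            refine ⟨reduct .qall x Hj, updVal γj x rj, updVal γ'j x pj, hrj,
              reduct_mono hsubj, hctxj.reduct _ _, ?_⟩
            intro z p p' hAz hBz
            by_cases hz : z = x
            · subst hz
              simp only [updVal, if_pos rfl] at hAz
              exact absurd (inj_inj_fst (Option.some.inj hAz)).symm hji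
            · simp only [updVal, if_neg hz] at hAz hBz ⊢
              exact hmatchj z p p' hAz hBz
        · right
          refine ⟨hlagj.1, LCond_qall hG hlagj.2.1, ?_⟩
          rcases hlagj.2.2 with ⟨Hj, γj, γ'j, hmemj, hE⟩ | ⟨Hj, γj, γ'j, hmemj, hE⟩
          · exact Or.inl ⟨Hj, γj, γ'j, hmemj, EmptImp_qall hG hE⟩
          · exact Or.inr ⟨Hj, γj, γ'j, hmemj, EmptImpRev_qall hG hE⟩
  -- ===================== qnex =====================
  · intro x hne q
    obtain ⟨φ0, hφ0⟩ := hne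
    obtain ⟨i, qq, rfl⟩ := inj_repr q
    rcases hcomp i with ⟨H, γ, γ', hmem, hsub, hctx, hmatch⟩ | hlag
    swap
    · exact (hlag.2.1.2.1 x φ0 hφ0 qq).elim
    obtain ⟨r, hr⟩ := (hsafe i _ hmem).2.2.2.1 x ⟨φ0, reduct_mono hsub hφ0⟩ qq
    refine ⟨inj w i r, reduct .qnex x G, w', w,
      updVal B x (inj w' i qq), updVal A x (inj w i r), rfl,
      hG.reduct _ _, hs.reduct _ _, ?_, ?_⟩
    · intro z
      by_cases hz : z = x
      · subst hz
        exact Or.inr ⟨i, qq, r, by simp [updVal], by simp [updVal]⟩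
      · rcases hown z with ⟨h1, h2⟩ | ⟨j, p, p', h1, h2⟩
        · exact Or.inl ⟨by simp [updVal, hz, h2], by simp [updVal, hz, h1]⟩
        · exact Or.inr ⟨j, p', p, by simp [updVal, hz, h2], by simp [updVal, hz, h1]⟩
    · intro j
      by_cases hji : j = i
      · subst hji
        left
        refine ⟨reduct .qnex x H, updVal γ' x qq, updVal γ x r, hr,
          reduct_mono hsub, hctx.reduct _ _, ?_⟩
        intro z p p' hAz hBz
        by_cases hz : z = x
        · subst hz
          simp only [updVal, if_pos rfl] at hAz hBz
          obtain rfl : qq = p := inj_inj_snd (Option.some.inj hAz)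
          obtain rfl : r = p' := inj_inj_snd (Option.some.inj hBz)
          simp [updVal]
        · simp only [updVal, if_neg hz] at hAz hBz ⊢
          exact (hmatch z p' p hBz hAz).symm
      · rcases hcomp j with ⟨Hj, γj, γ'j, hmemj, hsubj, hctxj, hmatchj⟩ | hlagj
        · rcases isEmpty_or_nonempty (w' j).carrier with hje | hne2
          · right
            exact ⟨Or.inl hje, demote_qnex (hsafe j) hmemj hsubj hctxj hG hje,
              Or.inr ⟨Hj, γj, γ'j, hmemj, EmptImp_qnex hG (EmptImp_of_subset hsubj)⟩⟩
          · obtain ⟨pj⟩ := hne2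
            obtain ⟨rj, hrj⟩ := (hsafe j _ hmemj).2.2.2.1 x ⟨φ0, reduct_mono hsubj hφ0⟩ pj
            left
            refine ⟨reduct .qnex x Hj, updVal γ'j x pj, updVal γj x rj, hrj,
              reduct_mono hsubj, hctxj.reduct _ _, ?_⟩
            intro z p p' hAz hBz
            by_cases hz : z = x
            · subst hz
              simp only [updVal, if_pos rfl] at hAz
              exact absurd (inj_inj_fst (Option.some.inj hAz)).symm hji
            · simp only [updVal, if_neg hz] at hAz hBz ⊢
              exact (hmatchj z p' p hBz hAz).symm
        · right
          refine ⟨hlagj.1.symm, LCond_qnex hG hlagj.2.1, ?_⟩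
          rcases hlagj.2.2 with ⟨Hj, γj, γ'j, hmemj, hE⟩ | ⟨Hj, γj, γ'j, hmemj, hE⟩
          · exact Or.inr ⟨Hj, γj, γ'j, hmemj, EmptImp_qnex hG hE⟩
          · exact Or.inl ⟨Hj, γj, γ'j, hmemj, EmptImpRev_qnex hG hE⟩
  -- ===================== qnall =====================
  · intro x hne q
    obtain ⟨φ0, hφ0⟩ := hne
    obtain ⟨i, qq, rfl⟩ := inj_repr q
    rcases hcomp i with ⟨H, γ, γ', hmem, hsub, hctx, hmatch⟩ | hlag
    swap
    · exact (hlag.2.1.2.2.2 x φ0 hφ0 qq).elim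
    obtain ⟨r, hr⟩ := (hsafe i _ hmem).2.2.2.2 x ⟨φ0, reduct_mono hsub hφ0⟩ qq
    refine ⟨inj w' i r, reduct .qnall x G, w', w,
      updVal B x (inj w' i r), updVal A x (inj w i qq), rfl,
      hG.reduct _ _, hs.reduct _ _, ?_, ?_⟩
    · intro z
      by_cases hz : z = x
      · subst hz
        exact Or.inr ⟨i, r, qq, by simp [updVal], by simp [updVal]⟩
      · rcases hown z with ⟨h1, h2⟩ | ⟨j, p, p', h1, h2⟩
        · exact Or.inl ⟨by simp [updVal, hz, h2], by simp [updVal, hz, h1]⟩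
        · exact Or.inr ⟨j, p', p, by simp [updVal, hz, h2], by simp [updVal, hz, h1]⟩
    · intro j
      by_cases hji : j = i
      · subst hji
        left
        refine ⟨reduct .qnall x H, updVal γ' x r, updVal γ x qq, hr,
          reduct_mono hsub, hctx.reduct _ _, ?_⟩
        intro z p p' hAz hBz
        by_cases hz : z = x
        · subst hz
          simp only [updVal, if_pos rfl] at hAz hBz
          obtain rfl : r = p := inj_inj_snd (Option.some.inj hAz)
          obtain rfl : qq = p' := inj_inj_snd (Option.some.inj hBz)
          simp [updVal]
        · simp only [updVal, if_neg hz] at hAz hBz ⊢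
          exact (hmatch z p' p hBz hAz).symm
      · rcases hcomp j with ⟨Hj, γj, γ'j, hmemj, hsubj, hctxj, hmatchj⟩ | hlagj
        · rcases isEmpty_or_nonempty (w j).carrier with hje | hne2
          · right
            exact ⟨Or.inr hje, demote_qnall (hsafe j) hmemj hsubj hctxj hG hje,
              Or.inr ⟨Hj, γj, γ'j, hmemj, EmptImp_qnall hG (EmptImp_of_subset hsubj)⟩⟩
          · obtain ⟨pj⟩ := hne2
            obtain ⟨rj, hrj⟩ := (hsafe j _ hmemj).2.2.2.2 x ⟨φ0, reduct_mono hsubj hφ0⟩ pj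
            left
            refine ⟨reduct .qnall x Hj, updVal γ'j x rj, updVal γj x pj, hrj,
              reduct_mono hsubj, hctxj.reduct _ _, ?_⟩
            intro z p p' hAz hBz
            by_cases hz : z = x
            · subst hz
              simp only [updVal, if_pos rfl] at hBz
              exact absurd (inj_inj_fst (Option.some.inj hBz)).symm hji
            · simp only [updVal, if_neg hz] at hAz hBz ⊢
              exact (hmatchj z p' p hBz hAz).symm
        · right
          refine ⟨hlagj.1.symm, LCond_qnall hG hlagj.2.1, ?_⟩
          rcases hlagj.2.2 with ⟨Hj, γj, γ'j, hmemj, hE⟩ | ⟨Hj, γj, γ'j, hmemj, hE⟩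
          · exact Or.inr ⟨Hj, γj, γ'j, hmemj, EmptImp_qnall hG hE⟩
          · exact Or.inl ⟨Hj, γj, γ'j, hmemj, EmptImpRev_qnall hG hE⟩

end Safe
section Fin
variable {ι β : Type*}

lemma findSome?_eq_none_of {l : List ι} {f : ι → Option β} (h : ∀ a ∈ l, f a = none) :
    l.findSome? f = none := by
  induction l with
  | nil => rfl
  | cons a l ih =>
    simp only [List.findSome?_cons, h a List.mem_cons_self]
    exact ih fun b hb => h b (List.mem_cons_of_mem a hb)

lemma findSome?_unique {l : List ι} {f : ι → Option β} {i : ι} {b : β} (hi : i ∈ l)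
    (hfi : f i = some b) (huniq : ∀ j ∈ l, j ≠ i → f j = none) : l.findSome? f = some b := by
  induction l with
  | nil => cases hi
  | cons a l ih =>
    by_cases hai : a = i
    · subst hai; simp [List.findSome?_cons, hfi]
    · simp only [List.findSome?_cons, huniq a List.mem_cons_self hai]
      exact ih (by rcases List.mem_cons.mp hi with rfl | hi'; exacts [absurd rfl hai, hi'])
        fun j hj hne => huniq j (List.mem_cons_of_mem a hj) hne

end Fin

theorem statement_2' (F : Set FOForm) (hF : IsFragment F) (hsuc : SucStable F)
    (k : ℕ) (u v : Fin k → GWord) (V : Fin k → Finset ℕ)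
    (α : ∀ i : Fin k, ℕ → Option (u i).carrier)
    (β : ∀ i : Fin k, ℕ → Option (v i).carrier)
    (hα : ∀ i : Fin k, ValDom (α i) (V i)) (hβ : ∀ i : Fin k, ValDom (β i) (V i))
    (hdisj : ∀ i j : Fin k, i ≠ j → Disjoint (V i) (V j))
    (hwin : ∀ i : Fin k, DuplicatorWins ⟨F, u i, v i, α i, β i⟩) :
    DuplicatorWins
      ⟨F, GWord.concatFam u, GWord.concatFam v, combineVal u α, combineVal v β⟩ := by
  choose Gd hGd hGdSafe using hwin
  refine ⟨GoodSet Gd, ?_, good_safe hGdSafe⟩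
  refine ⟨F, u, v, combineVal u α, combineVal v β, rfl,
    CtxP.ofFragment hF, hsuc, ?_, ?_⟩
  · -- owner invariant for the initial combined valuations
    intro z
    by_cases hz : ∃ i, z ∈ V i
    · obtain ⟨i, hzi⟩ := hz
      have hnone : ∀ j : Fin k, j ≠ i → α j z = none ∧ β j z = none := by
        intro j hne
        have hzj : z ∉ V j := fun hmem =>
          Finset.disjoint_left.mp (hdisj j i hne) hmem hzi
        constructor
        · exact Option.not_isSome_iff_eq_none.mp (fun hsome => hzj ((hα j z).mp hsome))
        · exact Option.not_isSome_iff_eq_none.mp (fun hsome => hzj ((hβ j z).mp hsome))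
      obtain ⟨p, hp⟩ := Option.isSome_iff_exists.mp ((hα i z).mpr hzi)
      obtain ⟨q, hq⟩ := Option.isSome_iff_exists.mp ((hβ i z).mpr hzi)
      right
      refine ⟨i, p, q, ?_, ?_⟩
      · exact findSome?_unique (List.mem_finRange i) (by rw [hp]; rfl)
          (fun j _ hne => by rw [(hnone j hne).1]; rfl)
      · exact findSome?_unique (List.mem_finRange i) (by rw [hq]; rfl)
          (fun j _ hne => by rw [(hnone j hne).2]; rfl)
    · push_neg at hz
      have hnone : ∀ j : Fin k, α j z = none ∧ β j z = none := by
        intro j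
        constructor
        · exact Option.not_isSome_iff_eq_none.mp (fun hsome => hz j ((hα j z).mp hsome))
        · exact Option.not_isSome_iff_eq_none.mp (fun hsome => hz j ((hβ j z).mp hsome))
      left
      constructor
      · exact findSome?_eq_none_of (fun j _ => by rw [(hnone j).1]; rfl)
      · exact findSome?_eq_none_of (fun j _ => by rw [(hnone j).2]; rfl)
  · -- all components are initially tracked
    intro j
    left
    refine ⟨F, α j, β j, hGd j, le_refl _, CtxP.ofFragment hF, ?_⟩
    intro z p p' hA hB
    constructor
    · obtain ⟨m, -, hfm⟩ := List.exists_of_findSome?_eq_some hA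
      obtain ⟨a, ha, hae⟩ := Option.map_eq_some_iff.mp hfm
      have he : inj u m a = inj u j p := hae
      obtain rfl : m = j := inj_inj_fst he
      obtain rfl : a = p := inj_inj_snd he
      exact ha
    · obtain ⟨m, -, hfm⟩ := List.exists_of_findSome?_eq_some hB
      obtain ⟨a, ha, hae⟩ := Option.map_eq_some_iff.mp hfm
      have he : inj v m a = inj v j p' := hae
      obtain rfl : m = j := inj_inj_fst he
      obtain rfl : a = p' := inj_inj_snd he
      exact ha

/-- Proposition on concatenation: if Duplicator wins each of the
configurations `(F, ⟨u_i, α_i⟩, ⟨v_i, β_i⟩)` over mutually disjoint variable sets `V_i`,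
then Duplicator wins the configuration on the concatenations with the unions of the
valuations. -/
theorem statement_2 (F : Set FOForm) (hF : IsFragment F) (hsuc : SucStable F)
    (k : ℕ) (u v : Fin k → GWord) (V : Fin k → Finset ℕ)
    (α : ∀ i : Fin k, ℕ → Option (u i).carrier)
    (β : ∀ i : Fin k, ℕ → Option (v i).carrier)
    (hα : ∀ i : Fin k, ValDom (α i) (V i)) (hβ : ∀ i : Fin k, ValDom (β i) (V i))
    (hdisj : ∀ i j : Fin k, i ≠ j → Disjoint (V i) (V j))
    (hwin : ∀ i : Fin k, DuplicatorWins ⟨F, u i, v i, α i, β i⟩) :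
    DuplicatorWins
      ⟨F, GWord.concatFam u, GWord.concatFam v, combineVal u α, combineVal v β⟩ := by
  exact statement_2' F hF hsuc k u v V α β hα hβ hdisj hwin

end EFGames
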